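/- arXiv:1202.5274 — 10 statements merged into one kernel-verified Lean document; each statement's English description precedes it below -/
import Mathlib

section
/- Under the global-pressure framework and for any discrete interface data, the sum of the upwind interface mobilities is bounded below by the total-mobility constant: M_{l,KL} + M_{g,KL} ≥ m0. -/
/-- Under the global-pressure framework and for any discrete interface
data, the sum of the upwind interface mobilities is bounded below by the
total-mobility constant: `M_{l,KL} + M_{g,KL} ≥ m0`. -/
theorem upwind_mobility_sum_lower_bound
    -- global-pressure framework
    (m0 : ℝ) (hm0 : 0 < m0)
    (pc pc' Ml Mg : ℝ → ℝ)
    (hpc_deriv : ∀ s ∈ Set.Icc (0:ℝ) 1, HasDerivWithinAt pc (pc' s) (Set.Icc 0 1) s)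
    (hpc'_cont : ContinuousOn pc' (Set.Icc 0 1))
    (hpc'_neg : ∀ s ∈ Set.Icc (0:ℝ) 1, pc' s < 0)
    (hMl_cont : ContinuousOn Ml (Set.Icc 0 1))
    (hMg_cont : ContinuousOn Mg (Set.Icc 0 1))
    (hMl_nonneg : ∀ s ∈ Set.Icc (0:ℝ) 1, 0 ≤ Ml s)
    (hMg_nonneg : ∀ s ∈ Set.Icc (0:ℝ) 1, 0 ≤ Mg s)
    (hMl_mono : MonotoneOn Ml (Set.Icc 0 1))
    (hMg_anti : AntitoneOn Mg (Set.Icc 0 1))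
    (hM_lower : ∀ s ∈ Set.Icc (0:ℝ) 1, m0 ≤ Ml s + Mg s)
    (ptilde pbar B : ℝ → ℝ)
    (hptilde : ∀ s, ptilde s = -∫ z in (0:ℝ)..s, Ml z / (Ml z + Mg z) * pc' z)
    (hpbar : ∀ s, pbar s = ∫ z in (0:ℝ)..s, Mg z / (Ml z + Mg z) * pc' z)
    (hB : ∀ s, B s = -∫ z in (0:ℝ)..s, Ml z * Mg z / (Ml z + Mg z) * pc' z)
    -- discrete interface data
    (sK sL : ℝ) (hsK : sK ∈ Set.Icc (0:ℝ) 1) (hsL : sL ∈ Set.Icc (0:ℝ) 1)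
    (plK plL pgK pgL : ℝ)
    (hcapK : pgK - plK = pbar sK - ptilde sK)
    (hcapL : pgL - plL = pbar sL - ptilde sL)
    (MlKL MgKL : ℝ)
    (hMlKL : MlKL = if plL - plK ≤ 0 then Ml sK else Ml sL)
    (hMgKL : MgKL = if pgL - pgK ≤ 0 then Mg sK else Mg sL) :
    m0 ≤ MlKL + MgKL := by

  have hsub : ∀ s ∈ Set.Icc (0:ℝ) 1, Set.uIcc (0:ℝ) s ⊆ Set.Icc (0:ℝ) 1 := by
    intro s hs
    rw [Set.uIcc_of_le hs.1]
    exact Set.Icc_subset_Icc le_rfl hs.2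
  have hM_pos : ∀ s ∈ Set.Icc (0:ℝ) 1, 0 < Ml s + Mg s := fun s hs =>
    lt_of_lt_of_le hm0 (hM_lower s hs)
  have hM_cont : ContinuousOn (fun z => Ml z + Mg z) (Set.Icc 0 1) := hMl_cont.add hMg_cont
  have hint : ∀ f : ℝ → ℝ, ContinuousOn f (Set.Icc 0 1) →
      ∀ a ∈ Set.Icc (0:ℝ) 1, ∀ b ∈ Set.Icc (0:ℝ) 1, IntervalIntegrable f MeasureTheory.volume a b := by
    intro f hf a ha b hb
    apply ContinuousOn.intervalIntegrable
    apply hf.mono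
    intro x hx
    rw [Set.mem_uIcc] at hx
    rcases hx with ⟨h1, h2⟩ | ⟨h1, h2⟩ <;>
      exact ⟨by linarith [ha.1, hb.1], by linarith [ha.2, hb.2]⟩
  have hMlfrac_cont : ContinuousOn (fun z => Ml z / (Ml z + Mg z) * pc' z) (Set.Icc 0 1) :=
    (hMl_cont.div hM_cont (fun z hz => ne_of_gt (hM_pos z hz))).mul hpc'_cont
  have hMgfrac_cont : ContinuousOn (fun z => Mg z / (Ml z + Mg z) * pc' z) (Set.Icc 0 1) :=
    (hMg_cont.div hM_cont (fun z hz => ne_of_gt (hM_pos z hz))).mul hpc'_cont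
  have h0 : (0:ℝ) ∈ Set.Icc (0:ℝ) 1 := by norm_num
  -- F s := pbar s - ptilde s = ∫₀ˢ pc'
  have hF : ∀ s ∈ Set.Icc (0:ℝ) 1, pbar s - ptilde s = ∫ z in (0:ℝ)..s, pc' z := by
    intro s hs
    rw [hpbar, hptilde, sub_neg_eq_add,
      ← intervalIntegral.integral_add (hint _ hMgfrac_cont 0 h0 s hs) (hint _ hMlfrac_cont 0 h0 s hs)]
    apply intervalIntegral.integral_congr
    intro z hz
    have hz1 : z ∈ Set.Icc (0:ℝ) 1 := hsub s hs hz
    have : Ml z + Mg z ≠ 0 := ne_of_gt (hM_pos z hz1)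
    field_simp
    ring
  -- strict decrease of F
  have hFdec : ∀ a ∈ Set.Icc (0:ℝ) 1, ∀ b ∈ Set.Icc (0:ℝ) 1, a < b →
      pbar b - ptilde b < pbar a - ptilde a := by
    intro a ha b hb hab
    rw [hF a ha, hF b hb]
    have hI : IntervalIntegrable pc' MeasureTheory.volume a b := hint _ hpc'_cont a ha b hb
    have hneg : (∫ z in a..b, pc' z) < 0 := by
      have hpos : 0 < ∫ z in a..b, -pc' z := by
        apply intervalIntegral.intervalIntegral_pos_of_pos_on hI.neg
        · intro x hx
          have hx1 : x ∈ Set.Icc (0:ℝ) 1 := ⟨le_trans ha.1 hx.1.le, le_trans hx.2.le hb.2⟩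
          simpa using hpc'_neg x hx1
        · exact hab
      rw [intervalIntegral.integral_neg] at hpos
      linarith
    have hsplit : (∫ z in (0:ℝ)..a, pc' z) + (∫ z in a..b, pc' z) = ∫ z in (0:ℝ)..b, pc' z :=
      intervalIntegral.integral_add_adjacent_intervals (hint _ hpc'_cont 0 h0 a ha) hI
    linarith
  have hKey : pgL - pgK - (plL - plK) = (pbar sL - ptilde sL) - (pbar sK - ptilde sK) := by
    linarith [hcapK, hcapL]
  rw [hMlKL, hMgKL]
  by_cases h1 : plL - plK ≤ 0 <;> by_cases h2 : pgL - pgK ≤ 0 <;>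
    simp only [h1, h2, if_true, if_false, if_pos, if_neg]
  · exact hM_lower sK hsK
  · -- δpl ≤ 0 < δpg : F sL > F sK ⇒ sL ≤ sK
    push_neg at h2
    have hFlt : pbar sK - ptilde sK < pbar sL - ptilde sL := by linarith
    have hle : sL ≤ sK := by
      by_contra hc
      push_neg at hc
      exact absurd (hFdec sK hsK sL hsL hc) (by linarith)
    have := hMl_mono hsL hsK hle
    have := hMg_anti hsL hsK hle
    have := hM_lower sL hsL
    linarith
  · -- δpg ≤ 0 < δpl : sK ≤ sL
    push_neg at h1
    have hFlt : pbar sL - ptilde sL < pbar sK - ptilde sK := by linarith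
    have hle : sK ≤ sL := by
      by_contra hc
      push_neg at hc
      exact absurd (hFdec sL hsL sK hsK hc) (by linarith)
    have := hMl_mono hsK hsL hle
    have := hMg_anti hsK hsL hle
    have := hM_lower sK hsK
    linarith
  · exact hM_lower sL hsL
end

section
/- Under the global-pressure framework and for any discrete interface data, the discrete global-pressure difference is controlled by the upwinded phase-pressure differences: m0 · (δp)² ≤ M_{l,KL} · (δp_l)² + M_{g,KL} · (δp_g)², where δp = p_L − p_K is the difference of the global pressures and δp_α = p_{α,L} − p_{α,K} for α ∈ {l,g}. -/
private lemma core_ineq (m AK AL BK BL u v C x Au Bu : ℝ)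
    (hm : 0 < m)
    (hAK : 0 ≤ AK) (hBL : 0 ≤ BL)
    (hu : 0 ≤ u) (hv : 0 ≤ v)
    (hmu : m * u ≤ AL * (u + v)) (hmv : m * v ≤ BK * (u + v))
    (hC1 : BL * u ≤ C) (hC2 : C ≤ BK * u) (hC3 : AK * v ≤ C) (hC4 : C ≤ AL * v)
    (hmK : m ≤ AK + BK) (hmL : m ≤ AL + BL)
    (hAKL : AK ≤ AL)
    (hAu : ((x + v) ≤ 0 ∧ Au = AK) ∨ (0 ≤ (x + v) ∧ Au = AL))
    (hBu : ((x - u) ≤ 0 ∧ Bu = BK) ∨ (0 ≤ (x - u) ∧ Bu = BL)) :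
    m * x ^ 2 ≤ Au * (x + v) ^ 2 + Bu * (x - u) ^ 2 := by
  rcases lt_or_ge 0 (x - u) with hbpos | hbnp
  · -- both phase differences positive
    have hapos : 0 < x + v := by linarith
    have hAu' : Au = AL := by
      rcases hAu with ⟨h1, h2⟩ | ⟨h1, h2⟩
      · linarith
      · exact h2
    have hBu' : Bu = BL := by
      rcases hBu with ⟨h1, h2⟩ | ⟨h1, h2⟩
      · linarith
      · exact h2
    rw [hAu', hBu']
    have hx : 0 < x := by linarith
    have hC0 : 0 ≤ C := le_trans (mul_nonneg hBL hu) hC1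
    have t2 : BL * u * (2*x - u) ≤ C * (2*x - u) :=
      mul_le_mul_of_nonneg_right hC1 (by linarith)
    have t1 : C * (2*x - u) ≤ C * (2*x + v) :=
      mul_le_mul_of_nonneg_left (by linarith) hC0
    have t3 : C * (2*x + v) ≤ AL * v * (2*x + v) :=
      mul_le_mul_of_nonneg_right hC4 (by linarith)
    have t4 : m * x^2 ≤ (AL + BL) * x^2 := mul_le_mul_of_nonneg_right hmL (sq_nonneg x)
    nlinarith [t1, t2, t3, t4]
  rcases lt_or_ge (x + v) 0 with haneg | hanp
  · have hAu' : Au = AK := by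
      rcases hAu with ⟨h1, h2⟩ | ⟨h1, h2⟩
      · exact h2
      · linarith
    have hBu' : Bu = BK := by
      rcases hBu with ⟨h1, h2⟩ | ⟨h1, h2⟩
      · exact h2
      · linarith
    rw [hAu', hBu']
    have hx : x < 0 := by linarith
    have hC0 : 0 ≤ C := le_trans (mul_nonneg hAK hv) hC3
    have t2 : C * (u - 2*x) ≤ BK * u * (u - 2*x) :=
      mul_le_mul_of_nonneg_right hC2 (by linarith)
    have t3 : AK * v * (-2*x - v) ≤ C * (-2*x - v) :=
      mul_le_mul_of_nonneg_right hC3 (by linarith)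
    have t1 : C * (-2*x - v) ≤ C * (u - 2*x) :=
      mul_le_mul_of_nonneg_left (by linarith) hC0
    have t4 : m * x^2 ≤ (AK + BK) * x^2 := mul_le_mul_of_nonneg_right hmK (sq_nonneg x)
    nlinarith [t1, t2, t3, t4]
  · -- mixed case
    have hAu' : Au * (x+v)^2 = AL * (x+v)^2 := by
      rcases hAu with ⟨h1, h2⟩ | ⟨h1, h2⟩
      · have h0 : x + v = 0 := le_antisymm h1 hanp
        rw [h0]; ring
      · rw [h2]
    have hBu' : Bu * (x-u)^2 = BK * (x-u)^2 := by
      rcases hBu with ⟨h1, h2⟩ | ⟨h1, h2⟩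
      · rw [h2]
      · have h0 : x - u = 0 := le_antisymm hbnp h1
        rw [h0]; ring
    rw [hAu', hBu']
    rcases eq_or_lt_of_le (by linarith : (0:ℝ) ≤ u + v) with hW | hW
    · have hu0 : u = 0 := by linarith
      have hv0 : v = 0 := by linarith
      subst hu0; subst hv0
      have : m ≤ AL + BK := by linarith
      nlinarith [mul_le_mul_of_nonneg_right this (sq_nonneg x)]
    · have e1 : m*u*(x+v)^2 ≤ AL*(u+v)*(x+v)^2 := mul_le_mul_of_nonneg_right hmu (sq_nonneg _)
      have e2 : m*v*(x-u)^2 ≤ BK*(u+v)*(x-u)^2 := mul_le_mul_of_nonneg_right hmv (sq_nonneg _)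
      have csid : (u+v)*(u*(x+v)^2 + v*(x-u)^2) - ((u+v)*x)^2 = u*v*(u+v)^2 := by ring
      have cs : ((u+v)*x)^2 ≤ (u+v)*(u*(x+v)^2 + v*(x-u)^2) := by
        have hcs0 : 0 ≤ u*v*(u+v)^2 := mul_nonneg (mul_nonneg hu hv) (sq_nonneg (u+v))
        linarith [csid]
      have e3 : m*((u+v)*x)^2 ≤ m*((u+v)*(u*(x+v)^2 + v*(x-u)^2)) :=
        mul_le_mul_of_nonneg_left cs hm.le
      have e4 : (u+v)*(m*u*(x+v)^2 + m*v*(x-u)^2)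
          ≤ (u+v)*(AL*(u+v)*(x+v)^2 + BK*(u+v)*(x-u)^2) :=
        mul_le_mul_of_nonneg_left (add_le_add e1 e2) (by linarith)
      have r1 : m*x^2*(u+v)^2 = m*((u+v)*x)^2 := by ring
      have r2 : m*((u+v)*(u*(x+v)^2 + v*(x-u)^2)) = (u+v)*(m*u*(x+v)^2 + m*v*(x-u)^2) := by
        ring
      have r3 : (u+v)*(AL*(u+v)*(x+v)^2 + BK*(u+v)*(x-u)^2)
          = (AL*(x+v)^2 + BK*(x-u)^2)*(u+v)^2 := by ring
      have key : m*x^2*(u+v)^2 ≤ (AL*(x+v)^2 + BK*(x-u)^2)*(u+v)^2 := by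
        linarith [e3, e4, r1, r2, r3]
      have hW2 : 0 < (u+v)^2 := by positivity
      exact le_of_mul_le_mul_right key hW2

open Set MeasureTheory intervalIntegral in
private lemma integral_facts
    (m0 : ℝ) (hm0 : 0 < m0)
    (pc' Ml Mg : ℝ → ℝ)
    (hpc'_cont : ContinuousOn pc' (Set.Icc 0 1))
    (hpc'_neg : ∀ s ∈ Set.Icc (0:ℝ) 1, pc' s < 0)
    (hMl_cont : ContinuousOn Ml (Set.Icc 0 1))
    (hMg_cont : ContinuousOn Mg (Set.Icc 0 1))
    (hMl_nonneg : ∀ s ∈ Set.Icc (0:ℝ) 1, 0 ≤ Ml s)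
    (hMg_nonneg : ∀ s ∈ Set.Icc (0:ℝ) 1, 0 ≤ Mg s)
    (hMl_mono : MonotoneOn Ml (Set.Icc 0 1))
    (hMg_anti : AntitoneOn Mg (Set.Icc 0 1))
    (hM_lower : ∀ s ∈ Set.Icc (0:ℝ) 1, m0 ≤ Ml s + Mg s)
    (ptilde pbar : ℝ → ℝ)
    (hptilde : ∀ s, ptilde s = -∫ z in (0:ℝ)..s, Ml z / (Ml z + Mg z) * pc' z)
    (hpbar : ∀ s, pbar s = ∫ z in (0:ℝ)..s, Mg z / (Ml z + Mg z) * pc' z)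
    (σ τ : ℝ) (hσ : σ ∈ Set.Icc (0:ℝ) 1) (hτ : τ ∈ Set.Icc (0:ℝ) 1) (hστ : σ ≤ τ) :
    ∃ u v C : ℝ,
      ptilde τ - ptilde σ = u ∧ pbar τ - pbar σ = -v ∧
      0 ≤ u ∧ 0 ≤ v ∧
      m0 * u ≤ Ml τ * (u + v) ∧ m0 * v ≤ Mg σ * (u + v) ∧
      Mg τ * u ≤ C ∧ C ≤ Mg σ * u ∧ Ml σ * v ≤ C ∧ C ≤ Ml τ * v := by
  have hsub : Icc σ τ ⊆ Icc (0:ℝ) 1 := Icc_subset_Icc hσ.1 hτ.2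
  have hMsum : ∀ z ∈ Icc (0:ℝ) 1, 0 < Ml z + Mg z :=
    fun z hz => lt_of_lt_of_le hm0 (hM_lower z hz)
  have hMne : ∀ z ∈ Icc (0:ℝ) 1, Ml z + Mg z ≠ 0 := fun z hz => (hMsum z hz).ne'
  have hMcont : ContinuousOn (fun z => Ml z + Mg z) (Icc (0:ℝ) 1) := hMl_cont.add hMg_cont
  have cfl : ContinuousOn (fun z => Ml z / (Ml z + Mg z) * pc' z) (Icc (0:ℝ) 1) :=
    (hMl_cont.div hMcont hMne).mul hpc'_cont
  have cfg : ContinuousOn (fun z => Mg z / (Ml z + Mg z) * pc' z) (Icc (0:ℝ) 1) :=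
    (hMg_cont.div hMcont hMne).mul hpc'_cont
  have cfc : ContinuousOn (fun z => Ml z * Mg z / (Ml z + Mg z) * pc' z) (Icc (0:ℝ) 1) :=
    ((hMl_cont.mul hMg_cont).div hMcont hMne).mul hpc'_cont
  have huIcc : uIcc σ τ ⊆ Icc (0:ℝ) 1 := by rw [uIcc_of_le hστ]; exact hsub
  have h0σ : uIcc (0:ℝ) σ ⊆ Icc (0:ℝ) 1 := by
    rw [uIcc_of_le hσ.1]; exact Icc_subset_Icc le_rfl hσ.2
  have h0τ : uIcc (0:ℝ) τ ⊆ Icc (0:ℝ) 1 := by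
    rw [uIcc_of_le hτ.1]; exact Icc_subset_Icc le_rfl hτ.2
  have ifl : IntervalIntegrable (fun z => Ml z / (Ml z + Mg z) * pc' z) volume σ τ :=
    (cfl.mono huIcc).intervalIntegrable
  have ifg : IntervalIntegrable (fun z => Mg z / (Ml z + Mg z) * pc' z) volume σ τ :=
    (cfg.mono huIcc).intervalIntegrable
  have ifc : IntervalIntegrable (fun z => Ml z * Mg z / (Ml z + Mg z) * pc' z) volume σ τ :=
    (cfc.mono huIcc).intervalIntegrable
  have ipc : IntervalIntegrable pc' volume σ τ := (hpc'_cont.mono huIcc).intervalIntegrable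
  have ifl0σ : IntervalIntegrable (fun z => Ml z / (Ml z + Mg z) * pc' z) volume 0 σ :=
    (cfl.mono h0σ).intervalIntegrable
  have ifl0τ : IntervalIntegrable (fun z => Ml z / (Ml z + Mg z) * pc' z) volume 0 τ :=
    (cfl.mono h0τ).intervalIntegrable
  have ifg0σ : IntervalIntegrable (fun z => Mg z / (Ml z + Mg z) * pc' z) volume 0 σ :=
    (cfg.mono h0σ).intervalIntegrable
  have ifg0τ : IntervalIntegrable (fun z => Mg z / (Ml z + Mg z) * pc' z) volume 0 τ :=
    (cfg.mono h0τ).intervalIntegrable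
  set I1 : ℝ := ∫ z in σ..τ, Ml z / (Ml z + Mg z) * pc' z with hI1
  set I2 : ℝ := ∫ z in σ..τ, Mg z / (Ml z + Mg z) * pc' z with hI2
  set IC : ℝ := ∫ z in σ..τ, Ml z * Mg z / (Ml z + Mg z) * pc' z with hIC
  set I3 : ℝ := ∫ z in σ..τ, pc' z with hI3
  -- sum identity
  have hWeq : I1 + I2 = I3 := by
    rw [hI1, hI2, hI3, ← integral_add ifl ifg]
    apply integral_congr
    intro z hz
    have hz1 := huIcc hz
    have hne := hMne z hz1
    field_simp
  refine ⟨-I1, -I2, -IC, ?_, ?_, ?_, ?_, ?_, ?_, ?_, ?_, ?_, ?_⟩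
  · rw [hptilde, hptilde]
    have h := integral_interval_sub_left ifl0τ ifl0σ
    rw [hI1]; linarith [h]
  · rw [hpbar, hpbar, neg_neg]
    have h := integral_interval_sub_left ifg0τ ifg0σ
    rw [hI2]; linarith [h]
  · -- 0 ≤ -I1
    have h : (0:ℝ) ≤ ∫ z in σ..τ, -(Ml z / (Ml z + Mg z) * pc' z) := by
      apply integral_nonneg hστ
      intro z hz
      have hz1 := hsub hz
      have h1 : 0 ≤ Ml z / (Ml z + Mg z) := div_nonneg (hMl_nonneg z hz1) (hMsum z hz1).le
      nlinarith [mul_nonneg h1 (neg_nonneg.2 (hpc'_neg z hz1).le)]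
    rw [intervalIntegral.integral_neg] at h
    linarith
  · -- 0 ≤ -I2
    have h : (0:ℝ) ≤ ∫ z in σ..τ, -(Mg z / (Ml z + Mg z) * pc' z) := by
      apply integral_nonneg hστ
      intro z hz
      have hz1 := hsub hz
      have h1 : 0 ≤ Mg z / (Ml z + Mg z) := div_nonneg (hMg_nonneg z hz1) (hMsum z hz1).le
      nlinarith [mul_nonneg h1 (neg_nonneg.2 (hpc'_neg z hz1).le)]
    rw [intervalIntegral.integral_neg] at h
    linarith
  · -- m0 * (-I1) ≤ Ml τ * (-I1 + -I2)
    have key : (∫ z in σ..τ, Ml τ * pc' z) ≤ ∫ z in σ..τ, m0 * (Ml z / (Ml z + Mg z) * pc' z) := by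
      apply integral_mono_on hστ (ipc.const_mul _) (ifl.const_mul _)
      intro z hz
      have hz1 := hsub hz
      have hMz := hMsum z hz1
      have hP : pc' z < 0 := hpc'_neg z hz1
      have hq : m0 * (Ml z / (Ml z + Mg z)) ≤ Ml τ := by
        have h1 : m0 * (Ml z / (Ml z + Mg z)) ≤ (Ml z + Mg z) * (Ml z / (Ml z + Mg z)) :=
          mul_le_mul_of_nonneg_right (hM_lower z hz1)
            (div_nonneg (hMl_nonneg z hz1) hMz.le)
        have h2 : (Ml z + Mg z) * (Ml z / (Ml z + Mg z)) = Ml z := by field_simp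
        have h3 : Ml z ≤ Ml τ := hMl_mono hz1 hτ hz.2
        linarith
      nlinarith [mul_le_mul_of_nonneg_right hq (neg_nonneg.2 hP.le)]
    rw [intervalIntegral.integral_const_mul, intervalIntegral.integral_const_mul, ← hI3, ← hI1] at key
    have e : Ml τ * (-I1 + -I2) = -(Ml τ * I3) := by
      have h : -I1 + -I2 = -I3 := by linarith [hWeq]
      rw [h]; ring
    linarith [key, e]
  · -- m0 * (-I2) ≤ Mg σ * (-I1 + -I2)
    have key : (∫ z in σ..τ, Mg σ * pc' z) ≤ ∫ z in σ..τ, m0 * (Mg z / (Ml z + Mg z) * pc' z) := by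
      apply integral_mono_on hστ (ipc.const_mul _) (ifg.const_mul _)
      intro z hz
      have hz1 := hsub hz
      have hMz := hMsum z hz1
      have hP : pc' z < 0 := hpc'_neg z hz1
      have hq : m0 * (Mg z / (Ml z + Mg z)) ≤ Mg σ := by
        have h1 : m0 * (Mg z / (Ml z + Mg z)) ≤ (Ml z + Mg z) * (Mg z / (Ml z + Mg z)) :=
          mul_le_mul_of_nonneg_right (hM_lower z hz1)
            (div_nonneg (hMg_nonneg z hz1) hMz.le)
        have h2 : (Ml z + Mg z) * (Mg z / (Ml z + Mg z)) = Mg z := by field_simp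
        have h3 : Mg z ≤ Mg σ := hMg_anti hσ hz1 hz.1
        linarith
      nlinarith [mul_le_mul_of_nonneg_right hq (neg_nonneg.2 hP.le)]
    rw [intervalIntegral.integral_const_mul, intervalIntegral.integral_const_mul, ← hI3, ← hI2] at key
    have e : Mg σ * (-I1 + -I2) = -(Mg σ * I3) := by
      have h : -I1 + -I2 = -I3 := by linarith [hWeq]
      rw [h]; ring
    linarith [key, e]
  · -- Mg τ * (-I1) ≤ -IC
    have key : IC ≤ ∫ z in σ..τ, Mg τ * (Ml z / (Ml z + Mg z) * pc' z) := by
      rw [hIC]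
      apply integral_mono_on hστ ifc (ifl.const_mul _)
      intro z hz
      have hz1 := hsub hz
      have hMz := hMsum z hz1
      have hP : pc' z < 0 := hpc'_neg z hz1
      have h1 : Mg τ * (Ml z / (Ml z + Mg z)) ≤ Mg z * (Ml z / (Ml z + Mg z)) :=
        mul_le_mul_of_nonneg_right (hMg_anti hz1 hτ hz.2)
          (div_nonneg (hMl_nonneg z hz1) hMz.le)
      have h2 := mul_le_mul_of_nonneg_right h1 (neg_nonneg.2 hP.le)
      have e1 : Mg z * (Ml z / (Ml z + Mg z)) * -pc' z
          = -(Ml z * Mg z / (Ml z + Mg z) * pc' z) := by ring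
      have e2 : Mg τ * (Ml z / (Ml z + Mg z)) * -pc' z
          = -(Mg τ * (Ml z / (Ml z + Mg z) * pc' z)) := by ring
      linarith [h2, e1, e2]
    rw [intervalIntegral.integral_const_mul, ← hI1] at key
    linarith
  · -- -IC ≤ Mg σ * (-I1)
    have key : (∫ z in σ..τ, Mg σ * (Ml z / (Ml z + Mg z) * pc' z)) ≤ IC := by
      rw [hIC]
      apply integral_mono_on hστ (ifl.const_mul _) ifc
      intro z hz
      have hz1 := hsub hz
      have hMz := hMsum z hz1
      have hP : pc' z < 0 := hpc'_neg z hz1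
      have h1 : Mg z * (Ml z / (Ml z + Mg z)) ≤ Mg σ * (Ml z / (Ml z + Mg z)) :=
        mul_le_mul_of_nonneg_right (hMg_anti hσ hz1 hz.1)
          (div_nonneg (hMl_nonneg z hz1) hMz.le)
      have h2 := mul_le_mul_of_nonneg_right h1 (neg_nonneg.2 hP.le)
      have e1 : Mg z * (Ml z / (Ml z + Mg z)) * -pc' z
          = -(Ml z * Mg z / (Ml z + Mg z) * pc' z) := by ring
      have e2 : Mg σ * (Ml z / (Ml z + Mg z)) * -pc' z
          = -(Mg σ * (Ml z / (Ml z + Mg z) * pc' z)) := by ring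
      linarith [h2, e1, e2]
    rw [intervalIntegral.integral_const_mul, ← hI1] at key
    linarith
  · -- Ml σ * (-I2) ≤ -IC
    have key : IC ≤ ∫ z in σ..τ, Ml σ * (Mg z / (Ml z + Mg z) * pc' z) := by
      rw [hIC]
      apply integral_mono_on hστ ifc (ifg.const_mul _)
      intro z hz
      have hz1 := hsub hz
      have hMz := hMsum z hz1
      have hP : pc' z < 0 := hpc'_neg z hz1
      have h1 : Ml σ * (Mg z / (Ml z + Mg z)) ≤ Ml z * (Mg z / (Ml z + Mg z)) :=
        mul_le_mul_of_nonneg_right (hMl_mono hσ hz1 hz.1)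
          (div_nonneg (hMg_nonneg z hz1) hMz.le)
      have h2 := mul_le_mul_of_nonneg_right h1 (neg_nonneg.2 hP.le)
      have e1 : Ml z * (Mg z / (Ml z + Mg z)) * -pc' z
          = -(Ml z * Mg z / (Ml z + Mg z) * pc' z) := by ring
      have e2 : Ml σ * (Mg z / (Ml z + Mg z)) * -pc' z
          = -(Ml σ * (Mg z / (Ml z + Mg z) * pc' z)) := by ring
      linarith [h2, e1, e2]
    rw [intervalIntegral.integral_const_mul, ← hI2] at key
    linarith
  · -- -IC ≤ Ml τ * (-I2)
    have key : (∫ z in σ..τ, Ml τ * (Mg z / (Ml z + Mg z) * pc' z)) ≤ IC := by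
      rw [hIC]
      apply integral_mono_on hστ (ifg.const_mul _) ifc
      intro z hz
      have hz1 := hsub hz
      have hMz := hMsum z hz1
      have hP : pc' z < 0 := hpc'_neg z hz1
      have h1 : Ml z * (Mg z / (Ml z + Mg z)) ≤ Ml τ * (Mg z / (Ml z + Mg z)) :=
        mul_le_mul_of_nonneg_right (hMl_mono hz1 hτ hz.2)
          (div_nonneg (hMg_nonneg z hz1) hMz.le)
      have h2 := mul_le_mul_of_nonneg_right h1 (neg_nonneg.2 hP.le)
      have e1 : Ml z * (Mg z / (Ml z + Mg z)) * -pc' z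
          = -(Ml z * Mg z / (Ml z + Mg z) * pc' z) := by ring
      have e2 : Ml τ * (Mg z / (Ml z + Mg z)) * -pc' z
          = -(Ml τ * (Mg z / (Ml z + Mg z) * pc' z)) := by ring
      linarith [h2, e1, e2]
    rw [intervalIntegral.integral_const_mul, ← hI2] at key
    linarith




/-- Under the global-pressure framework and for any discrete interface
data, the discrete global-pressure difference is controlled by the upwinded
phase-pressure differences: `m0 · (δp)² ≤ M_{l,KL} · (δp_l)² + M_{g,KL} · (δp_g)²`,
where `δp = p_L − p_K` is the difference of the global pressures
`p_i = p_{l,i} + p̄(s_i)`. -/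
theorem global_pressure_difference_controlled
    -- global-pressure framework
    (m0 : ℝ) (hm0 : 0 < m0)
    (pc pc' Ml Mg : ℝ → ℝ)
    (hpc_deriv : ∀ s ∈ Set.Icc (0:ℝ) 1, HasDerivWithinAt pc (pc' s) (Set.Icc 0 1) s)
    (hpc'_cont : ContinuousOn pc' (Set.Icc 0 1))
    (hpc'_neg : ∀ s ∈ Set.Icc (0:ℝ) 1, pc' s < 0)
    (hMl_cont : ContinuousOn Ml (Set.Icc 0 1))
    (hMg_cont : ContinuousOn Mg (Set.Icc 0 1))
    (hMl_nonneg : ∀ s ∈ Set.Icc (0:ℝ) 1, 0 ≤ Ml s)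
    (hMg_nonneg : ∀ s ∈ Set.Icc (0:ℝ) 1, 0 ≤ Mg s)
    (hMl_mono : MonotoneOn Ml (Set.Icc 0 1))
    (hMg_anti : AntitoneOn Mg (Set.Icc 0 1))
    (hM_lower : ∀ s ∈ Set.Icc (0:ℝ) 1, m0 ≤ Ml s + Mg s)
    (ptilde pbar B : ℝ → ℝ)
    (hptilde : ∀ s, ptilde s = -∫ z in (0:ℝ)..s, Ml z / (Ml z + Mg z) * pc' z)
    (hpbar : ∀ s, pbar s = ∫ z in (0:ℝ)..s, Mg z / (Ml z + Mg z) * pc' z)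
    (hB : ∀ s, B s = -∫ z in (0:ℝ)..s, Ml z * Mg z / (Ml z + Mg z) * pc' z)
    -- discrete interface data
    (sK sL : ℝ) (hsK : sK ∈ Set.Icc (0:ℝ) 1) (hsL : sL ∈ Set.Icc (0:ℝ) 1)
    (plK plL pgK pgL : ℝ)
    (hcapK : pgK - plK = pbar sK - ptilde sK)
    (hcapL : pgL - plL = pbar sL - ptilde sL)
    (pK pL : ℝ)
    (hpK : pK = plK + pbar sK) (hpL : pL = plL + pbar sL)
    (MlKL MgKL : ℝ)
    (hMlKL : MlKL = if plL - plK ≤ 0 then Ml sK else Ml sL)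
    (hMgKL : MgKL = if pgL - pgK ≤ 0 then Mg sK else Mg sL) :
    m0 * (pL - pK) ^ 2 ≤ MlKL * (plL - plK) ^ 2 + MgKL * (pgL - pgK) ^ 2 := by
  rcases le_total sK sL with h | h
  · obtain ⟨u, v, C, hueq, hveq, hu, hv, hmu, hmv, hC1, hC2, hC3, hC4⟩ :=
      integral_facts m0 hm0 pc' Ml Mg hpc'_cont hpc'_neg hMl_cont hMg_cont hMl_nonneg
        hMg_nonneg hMl_mono hMg_anti hM_lower ptilde pbar hptilde hpbar sK sL hsK hsL h
    have ha : plL - plK = (pL - pK) + v := by linarith [hveq, hpK, hpL]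
    have hb : pgL - pgK = (pL - pK) - u := by
      linarith [hueq, hveq, hcapK, hcapL, hpK, hpL]
    have hAu : ((pL - pK) + v ≤ 0 ∧ MlKL = Ml sK) ∨ (0 ≤ (pL - pK) + v ∧ MlKL = Ml sL) := by
      rcases le_or_gt (plL - plK) 0 with hl | hl
      · exact Or.inl ⟨by linarith, by rw [hMlKL, if_pos hl]⟩
      · exact Or.inr ⟨by linarith, by rw [hMlKL, if_neg (not_le.2 hl)]⟩
    have hBu : ((pL - pK) - u ≤ 0 ∧ MgKL = Mg sK) ∨ (0 ≤ (pL - pK) - u ∧ MgKL = Mg sL) := by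
      rcases le_or_gt (pgL - pgK) 0 with hg | hg
      · exact Or.inl ⟨by linarith, by rw [hMgKL, if_pos hg]⟩
      · exact Or.inr ⟨by linarith, by rw [hMgKL, if_neg (not_le.2 hg)]⟩
    have hcore := core_ineq m0 (Ml sK) (Ml sL) (Mg sK) (Mg sL) u v C (pL - pK) MlKL MgKL
      hm0 (hMl_nonneg sK hsK) (hMg_nonneg sL hsL) hu hv hmu hmv hC1 hC2 hC3 hC4
      (hM_lower sK hsK) (hM_lower sL hsL) (hMl_mono hsK hsL h) hAu hBu
    rw [ha, hb]
    exact hcore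
  · obtain ⟨u, v, C, hueq, hveq, hu, hv, hmu, hmv, hC1, hC2, hC3, hC4⟩ :=
      integral_facts m0 hm0 pc' Ml Mg hpc'_cont hpc'_neg hMl_cont hMg_cont hMl_nonneg
        hMg_nonneg hMl_mono hMg_anti hM_lower ptilde pbar hptilde hpbar sL sK hsL hsK h
    have ha : plK - plL = (pK - pL) + v := by linarith [hveq, hpK, hpL]
    have hb : pgK - pgL = (pK - pL) - u := by
      linarith [hueq, hveq, hcapK, hcapL, hpK, hpL]
    have hAu : ((pK - pL) + v ≤ 0 ∧ MlKL = Ml sL) ∨ (0 ≤ (pK - pL) + v ∧ MlKL = Ml sK) := by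
      rcases le_or_gt (plL - plK) 0 with hl | hl
      · exact Or.inr ⟨by linarith, by rw [hMlKL, if_pos hl]⟩
      · exact Or.inl ⟨by linarith, by rw [hMlKL, if_neg (not_le.2 hl)]⟩
    have hBu : ((pK - pL) - u ≤ 0 ∧ MgKL = Mg sL) ∨ (0 ≤ (pK - pL) - u ∧ MgKL = Mg sK) := by
      rcases le_or_gt (pgL - pgK) 0 with hg | hg
      · exact Or.inr ⟨by linarith, by rw [hMgKL, if_pos hg]⟩
      · exact Or.inl ⟨by linarith, by rw [hMgKL, if_neg (not_le.2 hg)]⟩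
    have hcore := core_ineq m0 (Ml sL) (Ml sK) (Mg sL) (Mg sK) u v C (pK - pL) MlKL MgKL
      hm0 (hMl_nonneg sL hsL) (hMg_nonneg sK hsK) hu hv hmu hmv hC1 hC2 hC3 hC4
      (hM_lower sL hsL) (hM_lower sK hsK) (hMl_mono hsL hsK h) hAu hBu
    have e0 : m0 * (pL - pK) ^ 2 = m0 * (pK - pL) ^ 2 := by ring
    rw [e0, show plL - plK = -((pK - pL) + v) from by linarith,
      show pgL - pgK = -((pK - pL) - u) from by linarith, neg_sq, neg_sq]
    exact hcore
end

section
/- There exists a constant C > 0, depending only on p_c, M_l, M_g and m0, such that under the global-pressure framework, for every choice of discrete interface data, the difference of the capillary function B is controlled by the upwinded phase-pressure differences: (B(s_L) − B(s_K))² ≤ C · ( M_{l,KL} · (δp_l)² + M_{g,KL} · (δp_g)² ). -/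
open Set intervalIntegral MeasureTheory

private lemma upwind_swap (a b x y : ℝ) :
    (if a - b ≤ 0 then y else x) * (a - b) ^ 2
      = (if b - a ≤ 0 then x else y) * (b - a) ^ 2 := by
  rcases lt_trichotomy a b with h | h | h
  · rw [if_pos (by linarith), if_neg (by linarith)]; ring
  · subst h; simp
  · rw [if_neg (by linarith), if_pos (by linarith)]; ring

private lemma core_estimate
    (m0 : ℝ) (hm0 : 0 < m0)
    (pc' Ml Mg : ℝ → ℝ)
    (hpc'_cont : ContinuousOn pc' (Set.Icc 0 1))
    (hpc'_neg : ∀ s ∈ Set.Icc (0:ℝ) 1, pc' s < 0)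
    (hMl_cont : ContinuousOn Ml (Set.Icc 0 1))
    (hMg_cont : ContinuousOn Mg (Set.Icc 0 1))
    (hMl_nonneg : ∀ s ∈ Set.Icc (0:ℝ) 1, 0 ≤ Ml s)
    (hMg_nonneg : ∀ s ∈ Set.Icc (0:ℝ) 1, 0 ≤ Mg s)
    (hMl_mono : MonotoneOn Ml (Set.Icc 0 1))
    (hMg_anti : AntitoneOn Mg (Set.Icc 0 1))
    (hM_lower : ∀ s ∈ Set.Icc (0:ℝ) 1, m0 ≤ Ml s + Mg s)
    (ptilde pbar B : ℝ → ℝ)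
    (hptilde : ∀ s, ptilde s = -∫ z in (0:ℝ)..s, Ml z / (Ml z + Mg z) * pc' z)
    (hpbar : ∀ s, pbar s = ∫ z in (0:ℝ)..s, Mg z / (Ml z + Mg z) * pc' z)
    (hB : ∀ s, B s = -∫ z in (0:ℝ)..s, Ml z * Mg z / (Ml z + Mg z) * pc' z)
    (sK : ℝ) (hsK : sK ∈ Set.Icc (0:ℝ) 1) (sL : ℝ) (hsL : sL ∈ Set.Icc (0:ℝ) 1)
    (hKL : sK ≤ sL)
    (plK plL pgK pgL : ℝ)
    (hK : pgK - plK = pbar sK - ptilde sK)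
    (hL : pgL - plL = pbar sL - ptilde sL) :
    (B sL - B sK) ^ 2 ≤
      (Ml 1 + Mg 0 + 1) * ((if plL - plK ≤ 0 then Ml sK else Ml sL) * (plL - plK) ^ 2
         + (if pgL - pgK ≤ 0 then Mg sK else Mg sL) * (pgL - pgK) ^ 2) := by
  have h0 : (0:ℝ) ∈ Set.Icc (0:ℝ) 1 := by norm_num
  have h1 : (1:ℝ) ∈ Set.Icc (0:ℝ) 1 := by norm_num
  have hMpos : ∀ s ∈ Set.Icc (0:ℝ) 1, 0 < Ml s + Mg s :=
    fun s hs => lt_of_lt_of_le hm0 (hM_lower s hs)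
  -- the three integrands
  set fB : ℝ → ℝ := fun z => Ml z * Mg z / (Ml z + Mg z) * pc' z with hfB
  set fbar : ℝ → ℝ := fun z => Mg z / (Ml z + Mg z) * pc' z with hfbar
  set ft : ℝ → ℝ := fun z => Ml z / (Ml z + Mg z) * pc' z with hft
  have hcB : ContinuousOn fB (Set.Icc 0 1) :=
    (((hMl_cont.mul hMg_cont).div (hMl_cont.add hMg_cont)
      (fun s hs => (hMpos s hs).ne')).mul hpc'_cont)
  have hcbar : ContinuousOn fbar (Set.Icc 0 1) :=
    ((hMg_cont.div (hMl_cont.add hMg_cont)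
      (fun s hs => (hMpos s hs).ne')).mul hpc'_cont)
  have hct : ContinuousOn ft (Set.Icc 0 1) :=
    ((hMl_cont.div (hMl_cont.add hMg_cont)
      (fun s hs => (hMpos s hs).ne')).mul hpc'_cont)
  have hsub : ∀ a ∈ Set.Icc (0:ℝ) 1, ∀ b ∈ Set.Icc (0:ℝ) 1,
      Set.uIcc a b ⊆ Set.Icc 0 1 := by
    intro a ha b hb x hx
    rw [Set.mem_uIcc] at hx
    constructor
    · rcases hx with ⟨h, _⟩ | ⟨h, _⟩ <;> linarith [ha.1, hb.1]
    · rcases hx with ⟨_, h⟩ | ⟨_, h⟩ <;> linarith [ha.2, hb.2]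
  have integ : ∀ f : ℝ → ℝ, ContinuousOn f (Set.Icc 0 1) →
      ∀ a ∈ Set.Icc (0:ℝ) 1, ∀ b ∈ Set.Icc (0:ℝ) 1,
        IntervalIntegrable f volume a b :=
    fun f hf a ha b hb => (hf.mono (hsub a ha b hb)).intervalIntegrable
  -- difference identities
  have hBdiff : B sL - B sK = -∫ z in sK..sL, fB z := by
    have := intervalIntegral.integral_interval_sub_left
      (integ fB hcB 0 h0 sL hsL) (integ fB hcB 0 h0 sK hsK)
    rw [hB sL, hB sK]; linarith
  have hpbardiff : pbar sL - pbar sK = ∫ z in sK..sL, fbar z := by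
    have := intervalIntegral.integral_interval_sub_left
      (integ fbar hcbar 0 h0 sL hsL) (integ fbar hcbar 0 h0 sK hsK)
    rw [hpbar sL, hpbar sK]; linarith
  have hptdiff : ptilde sL - ptilde sK = -∫ z in sK..sL, ft z := by
    have := intervalIntegral.integral_interval_sub_left
      (integ ft hct 0 h0 sL hsL) (integ ft hct 0 h0 sK hsK)
    rw [hptilde sL, hptilde sK]; linarith
  -- membership of the interval
  have hmem : ∀ z ∈ Set.Icc sK sL, z ∈ Set.Icc (0:ℝ) 1 :=
    fun z hz => ⟨le_trans hsK.1 hz.1, le_trans hz.2 hsL.2⟩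
  -- nonnegativity of -fB, -fbar, -ft on the interval
  have hnegB : ∀ z ∈ Set.Icc sK sL, 0 ≤ -fB z := by
    intro z hz
    have hz01 := hmem z hz
    have := hMpos z hz01
    have := hpc'_neg z hz01
    have h1' : 0 ≤ Ml z * Mg z / (Ml z + Mg z) :=
      div_nonneg (mul_nonneg (hMl_nonneg z hz01) (hMg_nonneg z hz01)) (by linarith)
    have : fB z ≤ 0 := mul_nonpos_of_nonneg_of_nonpos h1' (by linarith)
    linarith
  have hnegbar : ∀ z ∈ Set.Icc sK sL, 0 ≤ -fbar z := by
    intro z hz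
    have hz01 := hmem z hz
    have := hMpos z hz01
    have := hpc'_neg z hz01
    have h1' : 0 ≤ Mg z / (Ml z + Mg z) := div_nonneg (hMg_nonneg z hz01) (by linarith)
    have : fbar z ≤ 0 := mul_nonpos_of_nonneg_of_nonpos h1' (by linarith)
    linarith
  have hnegt : ∀ z ∈ Set.Icc sK sL, 0 ≤ -ft z := by
    intro z hz
    have hz01 := hmem z hz
    have := hMpos z hz01
    have := hpc'_neg z hz01
    have h1' : 0 ≤ Ml z / (Ml z + Mg z) := div_nonneg (hMl_nonneg z hz01) (by linarith)
    have : ft z ≤ 0 := mul_nonpos_of_nonneg_of_nonpos h1' (by linarith)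
    linarith
  -- δB ≥ 0
  have hδB_nonneg : 0 ≤ B sL - B sK := by
    rw [hBdiff, ← intervalIntegral.integral_neg]
    exact intervalIntegral.integral_nonneg hKL hnegB
  -- δB ≤ Ml sL * (pbar sK - pbar sL)
  have hbound_l : B sL - B sK ≤ Ml sL * (pbar sK - pbar sL) := by
    have hmono : ∀ z ∈ Set.Icc sK sL, -fB z ≤ Ml sL * (-fbar z) := by
      intro z hz
      have hz01 := hmem z hz
      have hle : Ml z ≤ Ml sL := hMl_mono hz01 hsL hz.2
      have hq : 0 ≤ -fbar z := hnegbar z hz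
      have key := mul_le_mul_of_nonneg_right hle hq
      have e1 : -fB z = Ml z * (-fbar z) := by simp only [hfB, hfbar]; ring
      rw [e1]; exact key
    have hint := intervalIntegral.integral_mono_on hKL
      ((integ fB hcB sK hsK sL hsL).neg)
      (((integ fbar hcbar sK hsK sL hsL).neg).const_mul (Ml sL)) hmono
    simp only [Pi.neg_apply, intervalIntegral.integral_neg,
      intervalIntegral.integral_const_mul] at hint
    rw [hBdiff]
    have he : pbar sK - pbar sL = -∫ z in sK..sL, fbar z := by linarith [hpbardiff]
    rw [he]
    linarith [hint]
  -- δB ≤ Mg sK * (ptilde sL - ptilde sK)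
  have hbound_g : B sL - B sK ≤ Mg sK * (ptilde sL - ptilde sK) := by
    have hmono : ∀ z ∈ Set.Icc sK sL, -fB z ≤ Mg sK * (-ft z) := by
      intro z hz
      have hz01 := hmem z hz
      have hle : Mg z ≤ Mg sK := hMg_anti hsK hz01 hz.1
      have hq : 0 ≤ -ft z := hnegt z hz
      have key := mul_le_mul_of_nonneg_right hle hq
      have e1 : -fB z = Mg z * (-ft z) := by simp only [hfB, hft]; ring
      have e2 : Mg z * (-ft z) ≤ Mg sK * (-ft z) := key
      rw [e1]; exact e2
    have hint := intervalIntegral.integral_mono_on hKL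
      ((integ fB hcB sK hsK sL hsL).neg)
      (((integ ft hct sK hsK sL hsL).neg).const_mul (Mg sK)) hmono
    simp only [Pi.neg_apply, intervalIntegral.integral_neg,
      intervalIntegral.integral_const_mul] at hint
    rw [hBdiff, hptdiff]
    linarith [hint]
  -- sign facts for pbar, ptilde differences
  have hdbar_nonpos : pbar sL - pbar sK ≤ 0 := by
    have h' : (0:ℝ) ≤ ∫ z in sK..sL, -fbar z :=
      intervalIntegral.integral_nonneg hKL hnegbar
    rw [intervalIntegral.integral_neg] at h'
    rw [hpbardiff]; linarith
  have hdt_nonneg : 0 ≤ ptilde sL - ptilde sK := by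
    rw [hptdiff, ← intervalIntegral.integral_neg]
    exact intervalIntegral.integral_nonneg hKL hnegt
  -- arithmetic
  set δB := B sL - B sK with hδB
  set δpl := plL - plK with hδpl
  set δpg := pgL - pgK with hδpg
  set dbar := pbar sL - pbar sK with hdbar
  set dt := ptilde sL - ptilde sK with hdt
  have hrel : δpg - δpl = dbar - dt := by
    simp only [hδpg, hδpl, hdbar, hdt]; linarith [hK, hL]
  have hMl1 : Ml sL ≤ Ml 1 := hMl_mono hsL h1 hsL.2
  have hMg0 : Mg sK ≤ Mg 0 := hMg_anti h0 hsK hsK.1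
  have hMlL_nonneg : 0 ≤ Ml sL := hMl_nonneg sL hsL
  have hMlK_nonneg : 0 ≤ Ml sK := hMl_nonneg sK hsK
  have hMgK_nonneg : 0 ≤ Mg sK := hMg_nonneg sK hsK
  have hMgL_nonneg : 0 ≤ Mg sL := hMg_nonneg sL hsL
  have hMl1_nonneg : 0 ≤ Ml 1 := hMl_nonneg 1 h1
  have hMg0_nonneg : 0 ≤ Mg 0 := hMg_nonneg 0 h0
  set C := Ml 1 + Mg 0 + 1 with hC
  have hC1 : Ml sL ≤ C := by simp only [hC]; linarith
  have hC2 : Mg sK ≤ C := by simp only [hC]; linarith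
  have hRHS_l_nonneg : 0 ≤ (if δpl ≤ 0 then Ml sK else Ml sL) * δpl ^ 2 := by
    apply mul_nonneg _ (sq_nonneg _)
    split <;> assumption
  have hRHS_g_nonneg : 0 ≤ (if δpg ≤ 0 then Mg sK else Mg sL) * δpg ^ 2 := by
    apply mul_nonneg _ (sq_nonneg _)
    split <;> assumption
  rcases le_total 0 (δpl + dbar) with hp | hp
  · -- global pressure difference nonnegative: use the liquid term
    have hδpl_nonneg : 0 ≤ δpl := by linarith
    have hδB_le : δB ≤ Ml sL * δpl := by
      have : Ml sL * (-dbar) ≤ Ml sL * δpl :=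
        mul_le_mul_of_nonneg_left (by linarith) hMlL_nonneg
      calc δB ≤ Ml sL * (pbar sK - pbar sL) := hbound_l
        _ = Ml sL * (-dbar) := by rw [hdbar]; ring_nf
        _ ≤ Ml sL * δpl := this
    rcases le_or_gt δpl 0 with hz | hz
    · -- δpl = 0, so δB = 0
      have hδpl0 : δpl = 0 := le_antisymm hz hδpl_nonneg
      have : δB = 0 := le_antisymm (by rw [hδpl0] at hδB_le; linarith) hδB_nonneg
      rw [this]
      have : (0:ℝ)^2 = 0 := by norm_num
      rw [this]
      apply mul_nonneg (by simp only [hC]; linarith)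
      linarith
    · have hifl : (if δpl ≤ 0 then Ml sK else Ml sL) = Ml sL := if_neg (not_le.mpr hz)
      have hsq : δB ^ 2 ≤ (Ml sL * δpl) ^ 2 := by
        apply sq_le_sq' _ hδB_le
        linarith [hδB_nonneg, hδB_le]
      calc δB ^ 2 ≤ (Ml sL * δpl) ^ 2 := hsq
        _ = Ml sL * (Ml sL * δpl ^ 2) := by ring
        _ ≤ C * (Ml sL * δpl ^ 2) :=
            mul_le_mul_of_nonneg_right hC1 (by positivity)
        _ ≤ C * ((if δpl ≤ 0 then Ml sK else Ml sL) * δpl ^ 2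
               + (if δpg ≤ 0 then Mg sK else Mg sL) * δpg ^ 2) := by
            rw [hifl]
            apply mul_le_mul_of_nonneg_left _ (by simp only [hC]; linarith)
            linarith
  · -- global pressure difference nonpositive: use the gas term
    have hδpg_nonpos : δpg ≤ 0 := by linarith
    have hδB_le : δB ≤ Mg sK * (-δpg) := by
      have : Mg sK * dt ≤ Mg sK * (-δpg) :=
        mul_le_mul_of_nonneg_left (by linarith) hMgK_nonneg
      calc δB ≤ Mg sK * dt := hbound_g
        _ ≤ Mg sK * (-δpg) := this
    have hifg : (if δpg ≤ 0 then Mg sK else Mg sL) = Mg sK := if_pos hδpg_nonpos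
    have hsq : δB ^ 2 ≤ (Mg sK * (-δpg)) ^ 2 := by
      apply sq_le_sq' _ hδB_le
      linarith [hδB_nonneg, hδB_le]
    calc δB ^ 2 ≤ (Mg sK * (-δpg)) ^ 2 := hsq
      _ = Mg sK * (Mg sK * δpg ^ 2) := by ring
      _ ≤ C * (Mg sK * δpg ^ 2) :=
          mul_le_mul_of_nonneg_right hC2 (by positivity)
      _ ≤ C * ((if δpl ≤ 0 then Ml sK else Ml sL) * δpl ^ 2
             + (if δpg ≤ 0 then Mg sK else Mg sL) * δpg ^ 2) := by
          rw [hifg]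
          apply mul_le_mul_of_nonneg_left _ (by simp only [hC]; linarith)
          linarith


/-- There exists a constant `C > 0`, depending only on `p_c`, `M_l`,
`M_g` and `m0`, such that under the global-pressure framework, for every choice of
discrete interface data, the difference of the capillary function `B` is controlled
by the upwinded phase-pressure differences:
`(B(s_L) − B(s_K))² ≤ C · ( M_{l,KL}·(δp_l)² + M_{g,KL}·(δp_g)² )`. -/
theorem capillary_term_estimate
    -- global-pressure framework
    (m0 : ℝ) (hm0 : 0 < m0)
    (pc pc' Ml Mg : ℝ → ℝ)
    (hpc_deriv : ∀ s ∈ Set.Icc (0:ℝ) 1, HasDerivWithinAt pc (pc' s) (Set.Icc 0 1) s)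
    (hpc'_cont : ContinuousOn pc' (Set.Icc 0 1))
    (hpc'_neg : ∀ s ∈ Set.Icc (0:ℝ) 1, pc' s < 0)
    (hMl_cont : ContinuousOn Ml (Set.Icc 0 1))
    (hMg_cont : ContinuousOn Mg (Set.Icc 0 1))
    (hMl_nonneg : ∀ s ∈ Set.Icc (0:ℝ) 1, 0 ≤ Ml s)
    (hMg_nonneg : ∀ s ∈ Set.Icc (0:ℝ) 1, 0 ≤ Mg s)
    (hMl_mono : MonotoneOn Ml (Set.Icc 0 1))
    (hMg_anti : AntitoneOn Mg (Set.Icc 0 1))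
    (hM_lower : ∀ s ∈ Set.Icc (0:ℝ) 1, m0 ≤ Ml s + Mg s)
    (ptilde pbar B : ℝ → ℝ)
    (hptilde : ∀ s, ptilde s = -∫ z in (0:ℝ)..s, Ml z / (Ml z + Mg z) * pc' z)
    (hpbar : ∀ s, pbar s = ∫ z in (0:ℝ)..s, Mg z / (Ml z + Mg z) * pc' z)
    (hB : ∀ s, B s = -∫ z in (0:ℝ)..s, Ml z * Mg z / (Ml z + Mg z) * pc' z) :
    ∃ C : ℝ, 0 < C ∧
      ∀ sK ∈ Set.Icc (0:ℝ) 1, ∀ sL ∈ Set.Icc (0:ℝ) 1,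
        ∀ plK plL pgK pgL : ℝ,
          pgK - plK = pbar sK - ptilde sK →
          pgL - plL = pbar sL - ptilde sL →
          (B sL - B sK) ^ 2 ≤
            C * ((if plL - plK ≤ 0 then Ml sK else Ml sL) * (plL - plK) ^ 2
               + (if pgL - pgK ≤ 0 then Mg sK else Mg sL) * (pgL - pgK) ^ 2) := by
  have h0 : (0:ℝ) ∈ Set.Icc (0:ℝ) 1 := by norm_num
  have h1 : (1:ℝ) ∈ Set.Icc (0:ℝ) 1 := by norm_num
  refine ⟨Ml 1 + Mg 0 + 1, by nlinarith [hMl_nonneg 1 h1, hMg_nonneg 0 h0], ?_⟩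
  intro sK hsK sL hsL plK plL pgK pgL hK hL
  rcases le_total sK sL with hKL | hKL
  · exact core_estimate m0 hm0 pc' Ml Mg hpc'_cont hpc'_neg hMl_cont hMg_cont
      hMl_nonneg hMg_nonneg hMl_mono hMg_anti hM_lower ptilde pbar B
      hptilde hpbar hB sK hsK sL hsL hKL plK plL pgK pgL hK hL
  · have h := core_estimate m0 hm0 pc' Ml Mg hpc'_cont hpc'_neg hMl_cont hMg_cont
      hMl_nonneg hMg_nonneg hMl_mono hMg_anti hM_lower ptilde pbar B
      hptilde hpbar hB sL hsL sK hsK hKL plL plK pgL pgK hL hK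
    have e0 : (B sK - B sL) ^ 2 = (B sL - B sK) ^ 2 := by ring
    rw [e0, upwind_swap plK plL (Ml sK) (Ml sL),
      upwind_swap pgK pgL (Mg sK) (Mg sL)] at h
    exact h
end

section
/- There exists a constant C > 0, depending only on p_c, M_l, M_g and m0, such that under the global-pressure framework, for every choice of discrete interface data, the dissipative term associated with p̄ is controlled by the upwinded phase-pressure differences: M_{l,KL} · (p̄(s_L) − p̄(s_K))² ≤ C · ( M_{l,KL} · (δp_l)² + M_{g,KL} · (δp_g)² ). -/
set_option maxHeartbeats 2000000


/-- There exists a constant `C > 0`, depending only on `p_c`, `M_l`,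
`M_g` and `m0`, such that under the global-pressure framework, for every choice of
discrete interface data, the dissipative term associated with `p̄` is controlled by
the upwinded phase-pressure differences:
`M_{l,KL}·(p̄(s_L) − p̄(s_K))² ≤ C · ( M_{l,KL}·(δp_l)² + M_{g,KL}·(δp_g)² )`. -/
theorem dissipative_term_pbar_estimate
    -- global-pressure framework
    (m0 : ℝ) (hm0 : 0 < m0)
    (pc pc' Ml Mg : ℝ → ℝ)
    (hpc_deriv : ∀ s ∈ Set.Icc (0:ℝ) 1, HasDerivWithinAt pc (pc' s) (Set.Icc 0 1) s)
    (hpc'_cont : ContinuousOn pc' (Set.Icc 0 1))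
    (hpc'_neg : ∀ s ∈ Set.Icc (0:ℝ) 1, pc' s < 0)
    (hMl_cont : ContinuousOn Ml (Set.Icc 0 1))
    (hMg_cont : ContinuousOn Mg (Set.Icc 0 1))
    (hMl_nonneg : ∀ s ∈ Set.Icc (0:ℝ) 1, 0 ≤ Ml s)
    (hMg_nonneg : ∀ s ∈ Set.Icc (0:ℝ) 1, 0 ≤ Mg s)
    (hMl_mono : MonotoneOn Ml (Set.Icc 0 1))
    (hMg_anti : AntitoneOn Mg (Set.Icc 0 1))
    (hM_lower : ∀ s ∈ Set.Icc (0:ℝ) 1, m0 ≤ Ml s + Mg s)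
    (ptilde pbar B : ℝ → ℝ)
    (hptilde : ∀ s, ptilde s = -∫ z in (0:ℝ)..s, Ml z / (Ml z + Mg z) * pc' z)
    (hpbar : ∀ s, pbar s = ∫ z in (0:ℝ)..s, Mg z / (Ml z + Mg z) * pc' z)
    (hB : ∀ s, B s = -∫ z in (0:ℝ)..s, Ml z * Mg z / (Ml z + Mg z) * pc' z) :
    ∃ C : ℝ, 0 < C ∧
      ∀ sK ∈ Set.Icc (0:ℝ) 1, ∀ sL ∈ Set.Icc (0:ℝ) 1,
        ∀ plK plL pgK pgL : ℝ,
          pgK - plK = pbar sK - ptilde sK →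
          pgL - plL = pbar sL - ptilde sL →
          (if plL - plK ≤ 0 then Ml sK else Ml sL) * (pbar sL - pbar sK) ^ 2 ≤
            C * ((if plL - plK ≤ 0 then Ml sK else Ml sL) * (plL - plK) ^ 2
               + (if pgL - pgK ≤ 0 then Mg sK else Mg sL) * (pgL - pgK) ^ 2) := by
  classical
  -- extrema of pc' on [0,1]
  obtain ⟨zM, hzM, hzMmax⟩ :=
    isCompact_Icc.exists_isMaxOn (Set.nonempty_Icc.2 zero_le_one) hpc'_cont
  obtain ⟨zm, hzm, hzmmin⟩ :=
    isCompact_Icc.exists_isMinOn (Set.nonempty_Icc.2 zero_le_one) hpc'_cont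
  set cm : ℝ := -pc' zM with hcmdef
  set cp : ℝ := -pc' zm with hcpdef
  have hcm_pos : 0 < cm := by
    have := hpc'_neg zM hzM; rw [hcmdef]; linarith
  have hcp_pos : 0 < cp := by
    have := hpc'_neg zm hzm; rw [hcpdef]; linarith
  have hpc'_le : ∀ z ∈ Set.Icc (0:ℝ) 1, pc' z ≤ -cm := by
    intro z hz; have h := hzMmax hz; rw [hcmdef]; simpa using h
  have hpc'_ge : ∀ z ∈ Set.Icc (0:ℝ) 1, -cp ≤ pc' z := by
    intro z hz; have h := hzmmin hz; rw [hcpdef]; simpa using h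
  set Mt : ℝ := Ml 1 with hMtdef
  have hMt0 : 0 ≤ Mt := hMl_nonneg 1 ⟨zero_le_one, le_rfl⟩
  have hmcne : m0 * cm ≠ 0 := (mul_pos hm0 hcm_pos).ne'
  set C : ℝ := 4 + 4 * Mt * cp / (m0 * cm) with hCdef
  have hK0 : 0 ≤ 4 * Mt * cp / (m0 * cm) :=
    div_nonneg (mul_nonneg (mul_nonneg (by norm_num) hMt0) hcp_pos.le)
      (mul_pos hm0 hcm_pos).le
  have hC4 : 4 ≤ C := by rw [hCdef]; linarith
  have hCpos : 0 < C := by linarith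
  have hCe : m0 * cm * C = 4 * (m0 * cm) + 4 * Mt * cp := by
    rw [hCdef]; field_simp
  refine ⟨C, hCpos, ?_⟩
  intro sK hsK sL hsL plK plL pgK pgL hK hL
  have hMpos : ∀ z ∈ Set.Icc (0:ℝ) 1, 0 < Ml z + Mg z := fun z hz =>
    lt_of_lt_of_le hm0 (hM_lower z hz)
  set f : ℝ → ℝ := fun z => Mg z / (Ml z + Mg z) * pc' z with hfdef
  set g : ℝ → ℝ := fun z => Ml z / (Ml z + Mg z) * pc' z with hgdef
  have hfc : ContinuousOn f (Set.Icc 0 1) :=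
    (hMg_cont.div (hMl_cont.add hMg_cont) fun z hz => (hMpos z hz).ne').mul hpc'_cont
  have hgc : ContinuousOn g (Set.Icc 0 1) :=
    (hMl_cont.div (hMl_cont.add hMg_cont) fun z hz => (hMpos z hz).ne').mul hpc'_cont
  have hsub : ∀ u ∈ Set.Icc (0:ℝ) 1, ∀ v ∈ Set.Icc (0:ℝ) 1,
      Set.uIcc u v ⊆ Set.Icc 0 1 := by
    intro u hu v hv
    rw [show Set.Icc (0:ℝ) 1 = Set.uIcc (0:ℝ) 1 from (Set.uIcc_of_le zero_le_one).symm]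
    exact Set.uIcc_subset_uIcc (by rwa [Set.uIcc_of_le zero_le_one])
      (by rwa [Set.uIcc_of_le zero_le_one])
  have hfint : ∀ u ∈ Set.Icc (0:ℝ) 1, ∀ v ∈ Set.Icc (0:ℝ) 1,
      IntervalIntegrable f MeasureTheory.volume u v := fun u hu v hv =>
    (hfc.mono (hsub u hu v hv)).intervalIntegrable
  have hgint : ∀ u ∈ Set.Icc (0:ℝ) 1, ∀ v ∈ Set.Icc (0:ℝ) 1,
      IntervalIntegrable g MeasureTheory.volume u v := fun u hu v hv =>
    (hgc.mono (hsub u hu v hv)).intervalIntegrable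
  have hpcint : ∀ u ∈ Set.Icc (0:ℝ) 1, ∀ v ∈ Set.Icc (0:ℝ) 1,
      IntervalIntegrable pc' MeasureTheory.volume u v := fun u hu v hv =>
    (hpc'_cont.mono (hsub u hu v hv)).intervalIntegrable
  have h01 : (0:ℝ) ∈ Set.Icc (0:ℝ) 1 := ⟨le_rfl, zero_le_one⟩
  set a : ℝ := ∫ z in sK..sL, f z with hadef
  set d : ℝ := ∫ z in sK..sL, pc' z with hddef
  set dl : ℝ := plL - plK with hdldef
  set dg : ℝ := pgL - pgK with hdgdef
  have hdbar : pbar sL - pbar sK = a := by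
    rw [hpbar sL, hpbar sK, hadef]
    exact intervalIntegral.integral_interval_sub_left (hfint 0 h01 sL hsL) (hfint 0 h01 sK hsK)
  have hdd : dg - dl = d := by
    have h1 : ptilde sL - ptilde sK = -∫ z in sK..sL, g z := by
      rw [hptilde sL, hptilde sK]
      have := intervalIntegral.integral_interval_sub_left (hgint 0 h01 sL hsL)
        (hgint 0 h01 sK hsK)
      linarith
    have h2 : (∫ z in sK..sL, (f z + g z)) = (∫ z in sK..sL, f z) + ∫ z in sK..sL, g z :=
      intervalIntegral.integral_add (hfint sK hsK sL hsL) (hgint sK hsK sL hsL)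
    have h3 : (∫ z in sK..sL, (f z + g z)) = ∫ z in sK..sL, pc' z := by
      apply intervalIntegral.integral_congr
      intro z hz
      have hz1 : z ∈ Set.Icc (0:ℝ) 1 := hsub sK hsK sL hsL hz
      have hMne : Ml z + Mg z ≠ 0 := (hMpos z hz1).ne'
      simp only [hfdef, hgdef]
      field_simp
      ring
    have h4 : dg - dl = (pbar sL - pbar sK) - (ptilde sL - ptilde sK) := by
      rw [hdgdef, hdldef]; linarith
    rw [h4, hdbar, h1, hadef, hddef]
    linarith
  -- key integral estimates for u ≤ v
  have key : ∀ u ∈ Set.Icc (0:ℝ) 1, ∀ v ∈ Set.Icc (0:ℝ) 1, u ≤ v →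
      (∫ z in u..v, pc' z) ≤ (v - u) * (-cm) ∧
      (∫ z in u..v, pc' z) ≤ (∫ z in u..v, f z) ∧
      (∫ z in u..v, f z) ≤ 0 ∧
      m0 * (-(∫ z in u..v, f z)) ≤ (v - u) * (cp * Mg u) := by
    intro u hu v hv huv
    have hmem : ∀ z ∈ Set.Icc u v, z ∈ Set.Icc (0:ℝ) 1 := fun z hz =>
      ⟨le_trans hu.1 hz.1, le_trans hz.2 hv.2⟩
    have hfle : ∀ z ∈ Set.Icc u v, pc' z ≤ f z ∧ f z ≤ 0 := by
      intro z hz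
      have hz1 := hmem z hz
      have hMz := hMpos z hz1
      have ht0 : 0 ≤ Mg z / (Ml z + Mg z) := div_nonneg (hMg_nonneg z hz1) hMz.le
      have ht1 : Mg z / (Ml z + Mg z) ≤ 1 :=
        (div_le_one hMz).2 (by linarith [hMl_nonneg z hz1])
      have hpz : pc' z ≤ 0 := (hpc'_neg z hz1).le
      constructor
      · have := mul_nonneg (sub_nonneg.2 ht1) (neg_nonneg.2 hpz)
        simp only [hfdef]
        nlinarith
      · simp only [hfdef]
        exact mul_nonpos_of_nonneg_of_nonpos ht0 hpz
    refine ⟨?_, ?_, ?_, ?_⟩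
    · have h := intervalIntegral.integral_mono_on huv (hpcint u hu v hv)
        intervalIntegrable_const (fun z hz => hpc'_le z (hmem z hz))
      rw [intervalIntegral.integral_const, smul_eq_mul] at h
      linarith
    · exact intervalIntegral.integral_mono_on huv (hpcint u hu v hv) (hfint u hu v hv)
        fun z hz => (hfle z hz).1
    · have h := intervalIntegral.integral_mono_on huv (hfint u hu v hv)
        (intervalIntegrable_const (c := (0:ℝ))) fun z hz => (hfle z hz).2
      simpa using h
    · have hpt : ∀ z ∈ Set.Icc u v, m0 * (-(f z)) ≤ cp * Mg u := by
        intro z hz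
        have hz1 := hmem z hz
        have hMz := hMpos z hz1
        have e : m0 * (-(f z)) = m0 / (Ml z + Mg z) * (Mg z * (-pc' z)) := by
          simp only [hfdef]; ring
        have h1 : m0 / (Ml z + Mg z) ≤ 1 := (div_le_one hMz).2 (hM_lower z hz1)
        have h2 : 0 ≤ m0 / (Ml z + Mg z) := div_nonneg hm0.le hMz.le
        have h3 : Mg z * (-pc' z) ≤ Mg u * cp := by
          have hMgz : Mg z ≤ Mg u := hMg_anti hu hz1 hz.1
          have hpcz : -pc' z ≤ cp := by linarith [hpc'_ge z hz1]
          exact mul_le_mul hMgz hpcz (by linarith [hpc'_neg z hz1]) (hMg_nonneg u hu)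
        have h4 : 0 ≤ Mg z * (-pc' z) :=
          mul_nonneg (hMg_nonneg z hz1) (by linarith [hpc'_neg z hz1])
        calc m0 * (-(f z)) = m0 / (Ml z + Mg z) * (Mg z * (-pc' z)) := e
          _ ≤ 1 * (Mg u * cp) := mul_le_mul h1 h3 h4 zero_le_one
          _ = cp * Mg u := by ring
      have hint1 : IntervalIntegrable (fun z => m0 * (-(f z))) MeasureTheory.volume u v :=
        ((hfint u hu v hv).neg.const_mul m0)
      have h := intervalIntegral.integral_mono_on huv hint1 intervalIntegrable_const hpt
      have h2 : (∫ z in u..v, m0 * (-(f z))) = m0 * (-(∫ z in u..v, f z)) := by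
        rw [intervalIntegral.integral_const_mul, intervalIntegral.integral_neg]
      rw [h2, intervalIntegral.integral_const, smul_eq_mul] at h
      exact h
  -- abbreviations for the upwind mobilities
  set MlKL : ℝ := if dl ≤ 0 then Ml sK else Ml sL with hMlKLdef
  set MgKL : ℝ := if dg ≤ 0 then Mg sK else Mg sL with hMgKLdef
  have hMlKL_nonneg : 0 ≤ MlKL := by
    rw [hMlKLdef]; split
    · exact hMl_nonneg sK hsK
    · exact hMl_nonneg sL hsL
  have hMgKL_nonneg : 0 ≤ MgKL := by
    rw [hMgKLdef]; split
    · exact hMg_nonneg sK hsK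
    · exact hMg_nonneg sL hsL
  have hMlKL_le : MlKL ≤ Mt := by
    rw [hMlKLdef, hMtdef]; split
    · exact hMl_mono hsK (Set.right_mem_Icc.2 zero_le_one) hsK.2
    · exact hMl_mono hsL (Set.right_mem_Icc.2 zero_le_one) hsL.2
  rw [hdbar]
  -- generic final step
  have final : ∀ G : ℝ, 0 ≤ G → m0 * cm * a ^ 2 ≤ 4 * (cp * G) * dg ^ 2 →
      MlKL * a ^ 2 ≤ C * (MlKL * dl ^ 2 + G * dg ^ 2) := by
    intro G hG hcore
    have hpos : (0:ℝ) < m0 * cm := mul_pos hm0 hcm_pos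
    have hGnn : 0 ≤ 4 * (cp * G) * dg ^ 2 :=
      mul_nonneg (mul_nonneg (by norm_num) (mul_nonneg hcp_pos.le hG)) (sq_nonneg dg)
    refine le_of_mul_le_mul_left ?_ hpos
    calc m0 * cm * (MlKL * a ^ 2) = MlKL * (m0 * cm * a ^ 2) := by ring
      _ ≤ MlKL * (4 * (cp * G) * dg ^ 2) := mul_le_mul_of_nonneg_left hcore hMlKL_nonneg
      _ ≤ Mt * (4 * (cp * G) * dg ^ 2) := mul_le_mul_of_nonneg_right hMlKL_le hGnn
      _ ≤ (4 * (m0 * cm) + 4 * Mt * cp) * (MlKL * dl ^ 2 + G * dg ^ 2) := by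
          nlinarith [mul_nonneg (mul_pos hm0 hcm_pos).le
              (mul_nonneg hMlKL_nonneg (sq_nonneg dl)),
            mul_nonneg (mul_pos hm0 hcm_pos).le (mul_nonneg hG (sq_nonneg dg)),
            mul_nonneg (mul_nonneg hMt0 hcp_pos.le)
              (mul_nonneg hMlKL_nonneg (sq_nonneg dl))]
      _ = m0 * cm * (C * (MlKL * dl ^ 2 + G * dg ^ 2)) := by rw [← hCe]; ring
  -- generic quadratic chain
  have core : ∀ A D L G E : ℝ, 0 ≤ A → A ≤ D → 0 ≤ L → 0 ≤ G →
      m0 * A ≤ L * (cp * G) → cm * L ≤ D → D ≤ 2 * E →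
      m0 * cm * A ^ 2 ≤ 4 * (cp * G) * E ^ 2 := by
    intro A D L G E hA hAD hL hG h5 h6 h7
    have hD : 0 ≤ D := le_trans hA hAD
    have hE : 0 ≤ E := by linarith
    have hcpG : 0 ≤ cp * G := mul_nonneg hcp_pos.le hG
    have p1 : (m0 * A) * (cm * A) ≤ (L * (cp * G)) * (cm * D) :=
      mul_le_mul h5 (mul_le_mul_of_nonneg_left hAD hcm_pos.le)
        (mul_nonneg hcm_pos.le hA) (mul_nonneg hL hcpG)
    have p2 : (cp * G) * ((cm * L) * D) ≤ (cp * G) * (D * D) :=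
      mul_le_mul_of_nonneg_left (mul_le_mul_of_nonneg_right h6 hD) hcpG
    have p3 : D * D ≤ (2 * E) * (2 * E) := mul_self_le_mul_self hD h7
    have p4 := mul_le_mul_of_nonneg_left p3 hcpG
    linarith [p1, p2, p4]
  by_cases hc : |d| ≤ 2 * |dl|
  · -- |δpl| controls everything
    have hasq : a ^ 2 ≤ d ^ 2 := by
      rcases le_total sK sL with h | h
      · obtain ⟨_, h2, h3, _⟩ := key sK hsK sL hsL h
        simp only [← hadef, ← hddef] at h2 h3
        nlinarith [mul_nonneg (show (0:ℝ) ≤ a - d by linarith)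
          (show (0:ℝ) ≤ -a - d by linarith)]
      · obtain ⟨_, h2, h3, _⟩ := key sL hsL sK hsK h
        have ea : a = -∫ z in sL..sK, f z := by
          rw [hadef]; exact intervalIntegral.integral_symm sL sK
        have ed : d = -∫ z in sL..sK, pc' z := by
          rw [hddef]; exact intervalIntegral.integral_symm sL sK
        nlinarith [mul_nonneg (show (0:ℝ) ≤ d - a by linarith)
          (show (0:ℝ) ≤ d + a by linarith)]
    have hd4 : d ^ 2 ≤ 4 * dl ^ 2 := by
      nlinarith [mul_self_le_mul_self (abs_nonneg d) hc, sq_abs d, sq_abs dl, abs_nonneg dl]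
    have h1 : 0 ≤ MgKL * dg ^ 2 := mul_nonneg hMgKL_nonneg (sq_nonneg dg)
    nlinarith [mul_le_mul_of_nonneg_left (le_trans hasq hd4) hMlKL_nonneg,
      mul_nonneg hMlKL_nonneg (sq_nonneg dl), h1, hC4, hCpos,
      mul_le_mul_of_nonneg_right hC4 (mul_nonneg hMlKL_nonneg (sq_nonneg dl)),
      mul_nonneg hCpos.le h1]
  · push_neg at hc
    rcases le_total sK sL with h | h
    · obtain ⟨h1, h2, h3, h4⟩ := key sK hsK sL hsL h
      simp only [← hadef, ← hddef] at h1 h2 h3 h4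
      have hd0 : d ≤ 0 := le_trans h2 h3
      have habsd : |d| = -d := abs_of_nonpos hd0
      rw [habsd] at hc
      have hdlabs := le_abs_self dl
      have hdlabs' := neg_abs_le dl
      have hdg0 : dg ≤ 0 := by linarith [hdd]
      have hdg2 : -d ≤ 2 * (-dg) := by linarith [hdd]
      have hMgKLe : MgKL = Mg sK := by rw [hMgKLdef, if_pos hdg0]
      rw [hMgKLe]
      refine final (Mg sK) (hMg_nonneg sK hsK) ?_
      have hcore := core (-a) (-d) (sL - sK) (Mg sK) (-dg)
        (by linarith) (by linarith) (by linarith) (hMg_nonneg sK hsK)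
        (by linarith [h4]) (by linarith [h1]) (by linarith)
      calc m0 * cm * a ^ 2 = m0 * cm * (-a) ^ 2 := by ring
        _ ≤ 4 * (cp * Mg sK) * (-dg) ^ 2 := hcore
        _ = 4 * (cp * Mg sK) * dg ^ 2 := by ring
    · obtain ⟨h1, h2, h3, h4⟩ := key sL hsL sK hsK h
      have ea : a = -∫ z in sL..sK, f z := by
        rw [hadef]; exact intervalIntegral.integral_symm sL sK
      have ed : d = -∫ z in sL..sK, pc' z := by
        rw [hddef]; exact intervalIntegral.integral_symm sL sK
      have hd0 : 0 ≤ d := by linarith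
      have habsd : |d| = d := abs_of_nonneg hd0
      rw [habsd] at hc
      have hdlabs := le_abs_self dl
      have hdlabs' := neg_abs_le dl
      have hdgpos : 0 < dg := by linarith [hdd]
      have hdg2 : d ≤ 2 * dg := by linarith [hdd]
      have hMgKLe : MgKL = Mg sL := by rw [hMgKLdef, if_neg (not_le.2 hdgpos)]
      rw [hMgKLe]
      refine final (Mg sL) (hMg_nonneg sL hsL) ?_
      have h4' : m0 * a ≤ (sK - sL) * (cp * Mg sL) := by rw [ea]; exact h4
      exact core a d (sK - sL) (Mg sL) dg
        (by linarith) (by linarith) (by linarith) (hMg_nonneg sL hsL)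
        h4' (by linarith [h1, ed]) hdg2
end

section
/- There exists a constant C > 0, depending only on p_c, M_l, M_g and m0, such that under the global-pressure framework, for every choice of discrete interface data, the dissipative term associated with p̃ is controlled by the upwinded phase-pressure differences: M_{g,KL} · (p̃(s_L) − p̃(s_K))² ≤ C · ( M_{l,KL} · (δp_l)² + M_{g,KL} · (δp_g)² ). -/
open MeasureTheory intervalIntegral


private lemma diss_conclude (Mx m0 : ℝ) (hm0 : 0 < m0) (hMx0 : 0 < Mx)
    (A B c L : ℝ) (hA : 0 ≤ A) (hB : 0 ≤ B) (hc : 0 ≤ c)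
    (hcC : c ≤ 4 + 8*Mx/m0 + 4*Mx^2/m0^2) (hle : L ≤ c*A) :
    L ≤ (4 + 8*Mx/m0 + 4*Mx^2/m0^2) * (A + B) := by
  have h9 : c*A ≤ (4 + 8*Mx/m0 + 4*Mx^2/m0^2)*A := mul_le_mul_of_nonneg_right hcC hA
  have hC : (0:ℝ) ≤ 4 + 8*Mx/m0 + 4*Mx^2/m0^2 := by positivity
  nlinarith [mul_nonneg hC hB]

lemma diss_alg (m0 Mx t r I MlB MgB mg x y : ℝ) (hm0 : 0 < m0) (hMx : m0 ≤ Mx)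
    (ht : 0 < t) (hr : 0 ≤ r) (hI : 0 ≤ I)
    (h1 : m0 * t ≤ MlB * I) (h2 : MgB * I ≤ Mx * r)
    (h3 : m0 ≤ MlB + MgB) (hMlB : 0 ≤ MlB)
    (hmg : 0 ≤ mg) (hmgU : mg ≤ Mx)
    (hx : t/2 + r ≤ |x|) :
    mg * t^2 ≤ (4 + 8*Mx/m0 + 4*Mx^2/m0^2) * (MlB * x^2 + mg * y^2) := by
  have hMx0 : 0 < Mx := lt_of_lt_of_le hm0 hMx
  have hy2 : 0 ≤ mg * y^2 := by positivity
  have hA : 0 ≤ MlB * x^2 := by positivity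
  have hxabs : 0 ≤ |x| := abs_nonneg x
  have hxsq : (t/2 + r)^2 ≤ x^2 := by
    calc (t/2+r)^2 ≤ |x|^2 := by nlinarith
    _ = x^2 := sq_abs x
  have hc1 : (0:ℝ) ≤ 8*Mx/m0 := by positivity
  have hc2 : (0:ℝ) ≤ 4*Mx^2/m0^2 := by positivity
  rcases le_or_gt (m0/2) MlB with hcase | hcase
  · -- MlB large
    refine diss_conclude Mx m0 hm0 hMx0 _ _ (8*Mx/m0) _ hA hy2 hc1 (by linarith) ?_
    have ht4 : t^2 ≤ 4*x^2 := by nlinarith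
    have h5 : mg * t^2 ≤ Mx * (4*x^2) := by nlinarith
    have h6 : Mx * (4*x^2) ≤ 8*Mx/m0 * (MlB * x^2) := by
      rw [div_mul_eq_mul_div, le_div_iff₀ hm0]
      nlinarith [mul_nonneg (mul_nonneg hMx0.le (sq_nonneg x)) hm0.le]
    linarith
  · -- MlB small, MgB ≥ m0/2
    have hMgB : m0/2 ≤ MgB := by linarith
    have hI2 : m0/2 * I ≤ Mx * r := le_trans (mul_le_mul_of_nonneg_right hMgB hI) h2
    have hα : m0^2*t ≤ 2*Mx*(MlB*r) := by
      have e1 := mul_le_mul_of_nonneg_left h1 hm0.le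
      have e2 := mul_le_mul_of_nonneg_left hI2 hMlB
      linarith
    have htr : t*r ≤ x^2 := by nlinarith [sq_nonneg t, sq_nonneg r]
    have hβ : m0^2*t^2 ≤ 2*Mx*(MlB*x^2) := by
      have e3 := mul_le_mul_of_nonneg_left hα ht.le
      have e4 := mul_le_mul_of_nonneg_left htr hMlB
      have e5 := mul_le_mul_of_nonneg_left e4 (by positivity : (0:ℝ) ≤ 2*Mx)
      linarith
    have h7 : m0^2*(mg*t^2) ≤ 4*Mx^2*(MlB*x^2) := by
      have e6 := mul_le_mul_of_nonneg_left hβ hMx0.le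
      have e7 := mul_le_mul_of_nonneg_right hmgU
        (mul_nonneg (sq_nonneg m0) (sq_nonneg t))
      have e8 : 0 ≤ Mx*Mx*(MlB*x^2) := mul_nonneg (mul_nonneg hMx0.le hMx0.le) hA
      linarith
    refine diss_conclude Mx m0 hm0 hMx0 _ _ (4*Mx^2/m0^2) _ hA hy2 hc2 (by linarith) ?_
    rw [div_mul_eq_mul_div, le_div_iff₀ (by positivity : (0:ℝ) < m0^2)]
    linarith

private lemma diss_integral (m0 : ℝ) (hm0 : 0 < m0) (pc' Ml Mg : ℝ → ℝ)
    (hpc'_cont : ContinuousOn pc' (Set.Icc 0 1))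
    (hpc'_neg : ∀ s ∈ Set.Icc (0:ℝ) 1, pc' s < 0)
    (hMl_cont : ContinuousOn Ml (Set.Icc 0 1))
    (hMg_cont : ContinuousOn Mg (Set.Icc 0 1))
    (hMl_nonneg : ∀ s ∈ Set.Icc (0:ℝ) 1, 0 ≤ Ml s)
    (hMg_nonneg : ∀ s ∈ Set.Icc (0:ℝ) 1, 0 ≤ Mg s)
    (hMl_mono : MonotoneOn Ml (Set.Icc 0 1))
    (hMg_anti : AntitoneOn Mg (Set.Icc 0 1))
    (hM_lower : ∀ s ∈ Set.Icc (0:ℝ) 1, m0 ≤ Ml s + Mg s)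
    (ptilde pbar : ℝ → ℝ)
    (hptilde : ∀ s, ptilde s = -∫ z in (0:ℝ)..s, Ml z / (Ml z + Mg z) * pc' z)
    (hpbar : ∀ s, pbar s = ∫ z in (0:ℝ)..s, Mg z / (Ml z + Mg z) * pc' z)
    (a b : ℝ) (ha : a ∈ Set.Icc (0:ℝ) 1) (hb : b ∈ Set.Icc (0:ℝ) 1) (hab : a ≤ b) :
    0 ≤ ptilde b - ptilde a ∧ 0 ≤ pbar a - pbar b ∧
    ∃ I : ℝ, 0 ≤ I ∧ m0 * (ptilde b - ptilde a) ≤ Ml b * I ∧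
      Mg b * I ≤ (Ml 1 + Mg 0) * (pbar a - pbar b) := by
  set Mx := Ml 1 + Mg 0 with hMxdef
  have h01 : (0:ℝ) ∈ Set.Icc (0:ℝ) 1 := by constructor <;> norm_num
  have h11 : (1:ℝ) ∈ Set.Icc (0:ℝ) 1 := by constructor <;> norm_num
  have hMxpos : 0 < Mx := by
    have h1 := hM_lower 0 h01
    have h2 := hMl_mono h01 h11 zero_le_one
    exact lt_of_lt_of_le hm0 (by simp only [hMxdef]; linarith)
  have hMpos : ∀ z ∈ Set.Icc (0:ℝ) 1, 0 < Ml z + Mg z := fun z hz =>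
    lt_of_lt_of_le hm0 (hM_lower z hz)
  have hMle : ∀ z ∈ Set.Icc (0:ℝ) 1, Ml z + Mg z ≤ Mx := by
    intro z hz
    have h1 := hMl_mono hz h11 hz.2
    have h2 := hMg_anti h01 hz hz.1
    simp only [hMxdef]; linarith
  have hsubab : Set.Icc a b ⊆ Set.Icc (0:ℝ) 1 := Set.Icc_subset_Icc ha.1 hb.2
  set f1 : ℝ → ℝ := fun z => Ml z / (Ml z + Mg z) * pc' z with hf1
  set f2 : ℝ → ℝ := fun z => Mg z / (Ml z + Mg z) * pc' z with hf2
  have hMcont : ContinuousOn (fun z => Ml z + Mg z) (Set.Icc (0:ℝ) 1) :=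
    hMl_cont.add hMg_cont
  have hcont1 : ContinuousOn f1 (Set.Icc (0:ℝ) 1) :=
    (hMl_cont.div hMcont fun z hz => (hMpos z hz).ne').mul hpc'_cont
  have hcont2 : ContinuousOn f2 (Set.Icc (0:ℝ) 1) :=
    (hMg_cont.div hMcont fun z hz => (hMpos z hz).ne').mul hpc'_cont
  have hii : ∀ g : ℝ → ℝ, ContinuousOn g (Set.Icc (0:ℝ) 1) → ∀ u v : ℝ,
      u ∈ Set.Icc (0:ℝ) 1 → v ∈ Set.Icc (0:ℝ) 1 → IntervalIntegrable g volume u v := by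
    intro g hg u v hu hv
    exact (hg.mono (Set.uIcc_subset_Icc hu hv)).intervalIntegrable
  -- t equation
  have ht_eq : ptilde b - ptilde a = ∫ z in a..b, -f1 z := by
    have hsub := integral_interval_sub_left (hii f1 hcont1 0 b h01 hb)
      (hii f1 hcont1 0 a h01 ha)
    rw [hptilde a, hptilde b, intervalIntegral.integral_neg]
    linarith
  have hr_eq : pbar a - pbar b = ∫ z in a..b, -f2 z := by
    have hsub := integral_interval_sub_left (hii f2 hcont2 0 b h01 hb)
      (hii f2 hcont2 0 a h01 ha)
    rw [hpbar a, hpbar b, intervalIntegral.integral_neg]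
    linarith
  set I : ℝ := ∫ z in a..b, -pc' z with hIdef
  have hφcont : ContinuousOn (fun z => -pc' z) (Set.Icc (0:ℝ) 1) := hpc'_cont.neg
  have hφ : ∀ z ∈ Set.Icc a b, 0 ≤ -pc' z := fun z hz =>
    neg_nonneg.2 (hpc'_neg z (hsubab hz)).le
  have hI0 : 0 ≤ I := intervalIntegral.integral_nonneg hab hφ
  -- pointwise bounds for f1
  have hf1_nonneg : ∀ z ∈ Set.Icc a b, 0 ≤ -f1 z := by
    intro z hz
    have hz1 := hsubab hz
    have : -f1 z = Ml z / (Ml z + Mg z) * (-pc' z) := by simp [hf1]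
    rw [this]
    exact mul_nonneg (div_nonneg (hMl_nonneg z hz1) (hMpos z hz1).le) (hφ z hz)
  have ht0 : 0 ≤ ptilde b - ptilde a := by
    rw [ht_eq]; exact intervalIntegral.integral_nonneg hab hf1_nonneg
  have hf2_nonneg : ∀ z ∈ Set.Icc a b, 0 ≤ -f2 z := by
    intro z hz
    have hz1 := hsubab hz
    have : -f2 z = Mg z / (Ml z + Mg z) * (-pc' z) := by simp [hf2]
    rw [this]
    exact mul_nonneg (div_nonneg (hMg_nonneg z hz1) (hMpos z hz1).le) (hφ z hz)
  have hr0 : 0 ≤ pbar a - pbar b := by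
    rw [hr_eq]; exact intervalIntegral.integral_nonneg hab hf2_nonneg
  refine ⟨ht0, hr0, I, hI0, ?_, ?_⟩
  · -- m0 * t ≤ Ml b * I
    have hptw : ∀ z ∈ Set.Icc a b, -f1 z ≤ Ml b / m0 * (-pc' z) := by
      intro z hz
      have hz1 := hsubab hz
      have e1 : -f1 z = Ml z / (Ml z + Mg z) * (-pc' z) := by simp [hf1]
      rw [e1]
      refine mul_le_mul_of_nonneg_right ?_ (hφ z hz)
      exact div_le_div₀ (hMl_nonneg b hb) (hMl_mono hz1 hb hz.2) hm0 (hM_lower z hz1)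
    have hmono : (∫ z in a..b, -f1 z) ≤ ∫ z in a..b, Ml b / m0 * (-pc' z) :=
      intervalIntegral.integral_mono_on hab
        (hii _ hcont1.neg a b ha hb)
        (hii _ (continuousOn_const.mul hφcont) a b ha hb)
        hptw
    have hcm : (∫ z in a..b, Ml b / m0 * (-pc' z)) = Ml b / m0 * I := by
      rw [hIdef, ← intervalIntegral.integral_const_mul]
    rw [ht_eq]
    have h5 : (∫ z in a..b, -f1 z) ≤ Ml b / m0 * I := by rw [← hcm]; exact hmono
    have := mul_le_mul_of_nonneg_left h5 hm0.le
    calc m0 * ∫ z in a..b, -f1 z ≤ m0 * (Ml b / m0 * I) := this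
      _ = Ml b * I := by field_simp
  · -- Mg b * I ≤ Mx * r
    have hptw : ∀ z ∈ Set.Icc a b, Mg b / Mx * (-pc' z) ≤ -f2 z := by
      intro z hz
      have hz1 := hsubab hz
      have e1 : -f2 z = Mg z / (Ml z + Mg z) * (-pc' z) := by simp [hf2]
      rw [e1]
      refine mul_le_mul_of_nonneg_right ?_ (hφ z hz)
      exact div_le_div₀ (hMg_nonneg z hz1) (hMg_anti hz1 hb hz.2) (hMpos z hz1) (hMle z hz1)
    have hmono : (∫ z in a..b, Mg b / Mx * (-pc' z)) ≤ ∫ z in a..b, -f2 z :=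
      intervalIntegral.integral_mono_on hab
        (hii _ (continuousOn_const.mul hφcont) a b ha hb)
        (hii _ hcont2.neg a b ha hb)
        hptw
    have hcm : (∫ z in a..b, Mg b / Mx * (-pc' z)) = Mg b / Mx * I := by
      rw [hIdef, ← intervalIntegral.integral_const_mul]
    rw [hr_eq]
    have h5 : Mg b / Mx * I ≤ ∫ z in a..b, -f2 z := by rw [← hcm]; exact hmono
    have := mul_le_mul_of_nonneg_left h5 hMxpos.le
    calc Mg b * I = Mx * (Mg b / Mx * I) := by field_simp
      _ ≤ Mx * ∫ z in a..b, -f2 z := this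

/-- There exists a constant `C > 0`, depending only on `p_c`, `M_l`,
`M_g` and `m0`, such that under the global-pressure framework, for every choice of
discrete interface data, the dissipative term associated with `p̃` is controlled by
the upwinded phase-pressure differences:
`M_{g,KL}·(p̃(s_L) − p̃(s_K))² ≤ C · ( M_{l,KL}·(δp_l)² + M_{g,KL}·(δp_g)² )`. -/
theorem dissipative_term_ptilde_estimate
    -- global-pressure framework
    (m0 : ℝ) (hm0 : 0 < m0)
    (pc pc' Ml Mg : ℝ → ℝ)
    (hpc_deriv : ∀ s ∈ Set.Icc (0:ℝ) 1, HasDerivWithinAt pc (pc' s) (Set.Icc 0 1) s)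
    (hpc'_cont : ContinuousOn pc' (Set.Icc 0 1))
    (hpc'_neg : ∀ s ∈ Set.Icc (0:ℝ) 1, pc' s < 0)
    (hMl_cont : ContinuousOn Ml (Set.Icc 0 1))
    (hMg_cont : ContinuousOn Mg (Set.Icc 0 1))
    (hMl_nonneg : ∀ s ∈ Set.Icc (0:ℝ) 1, 0 ≤ Ml s)
    (hMg_nonneg : ∀ s ∈ Set.Icc (0:ℝ) 1, 0 ≤ Mg s)
    (hMl_mono : MonotoneOn Ml (Set.Icc 0 1))
    (hMg_anti : AntitoneOn Mg (Set.Icc 0 1))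
    (hM_lower : ∀ s ∈ Set.Icc (0:ℝ) 1, m0 ≤ Ml s + Mg s)
    (ptilde pbar B : ℝ → ℝ)
    (hptilde : ∀ s, ptilde s = -∫ z in (0:ℝ)..s, Ml z / (Ml z + Mg z) * pc' z)
    (hpbar : ∀ s, pbar s = ∫ z in (0:ℝ)..s, Mg z / (Ml z + Mg z) * pc' z)
    (hB : ∀ s, B s = -∫ z in (0:ℝ)..s, Ml z * Mg z / (Ml z + Mg z) * pc' z) :
    ∃ C : ℝ, 0 < C ∧
      ∀ sK ∈ Set.Icc (0:ℝ) 1, ∀ sL ∈ Set.Icc (0:ℝ) 1,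
        ∀ plK plL pgK pgL : ℝ,
          pgK - plK = pbar sK - ptilde sK →
          pgL - plL = pbar sL - ptilde sL →
          (if pgL - pgK ≤ 0 then Mg sK else Mg sL) * (ptilde sL - ptilde sK) ^ 2 ≤
            C * ((if plL - plK ≤ 0 then Ml sK else Ml sL) * (plL - plK) ^ 2
               + (if pgL - pgK ≤ 0 then Mg sK else Mg sL) * (pgL - pgK) ^ 2) := by
  classical
  have h01 : (0:ℝ) ∈ Set.Icc (0:ℝ) 1 := by constructor <;> norm_num
  have h11 : (1:ℝ) ∈ Set.Icc (0:ℝ) 1 := by constructor <;> norm_num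
  set Mx := Ml 1 + Mg 0 with hMxdef
  have hMx : m0 ≤ Mx := by
    have h1 := hM_lower 0 h01
    have h2 := hMl_mono h01 h11 zero_le_one
    simp only [hMxdef]; linarith
  have hMxpos : 0 < Mx := lt_of_lt_of_le hm0 hMx
  refine ⟨4 + 8*Mx/m0 + 4*Mx^2/m0^2, by positivity, ?_⟩
  intro sK hsK sL hsL plK plL pgK pgL hK hL
  set x := plL - plK with hxdef
  set y := pgL - pgK with hydef
  set T := ptilde sL - ptilde sK with hTdef
  set mg := (if y ≤ 0 then Mg sK else Mg sL) with hmgdef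
  have hmg0 : 0 ≤ mg := by
    rw [hmgdef]; split
    · exact hMg_nonneg sK hsK
    · exact hMg_nonneg sL hsL
  have hmgU : mg ≤ Mx := by
    have hK0 := hMg_anti h01 hsK hsK.1
    have hL0 := hMg_anti h01 hsL hsL.1
    have := hMl_nonneg 1 h11
    rw [hmgdef]; split <;> (simp only [hMxdef]; linarith)
  have hml0 : 0 ≤ (if x ≤ 0 then Ml sK else Ml sL) := by
    split
    · exact hMl_nonneg sK hsK
    · exact hMl_nonneg sL hsL
  have hrel : y - x = (pbar sL - pbar sK) - T := by
    rw [hxdef, hydef, hTdef]; linarith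
  rcases le_or_gt |T| (2*|y|) with hY | hY
  · -- small-t case: T² ≤ 4 y²
    have ht4 : T^2 ≤ 4*y^2 := by
      nlinarith [mul_self_le_mul_self (abs_nonneg T) hY, sq_abs T, sq_abs y,
        abs_nonneg y]
    have hB2 : 0 ≤ mg * y^2 := mul_nonneg hmg0 (sq_nonneg y)
    have hA2 : 0 ≤ (if x ≤ 0 then Ml sK else Ml sL) * x^2 :=
      mul_nonneg hml0 (sq_nonneg x)
    have hst : mg * T^2 ≤ 4 * (mg * y^2) := by
      nlinarith [mul_le_mul_of_nonneg_left ht4 hmg0]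
    have hC4 : (4:ℝ) ≤ 4 + 8*Mx/m0 + 4*Mx^2/m0^2 := by
      have : (0:ℝ) ≤ 8*Mx/m0 + 4*Mx^2/m0^2 := by positivity
      linarith
    have hCpos : (0:ℝ) ≤ 4 + 8*Mx/m0 + 4*Mx^2/m0^2 := by positivity
    calc mg * T^2 ≤ 4 * (mg * y^2) := hst
      _ ≤ (4 + 8*Mx/m0 + 4*Mx^2/m0^2) * (mg * y^2) :=
          mul_le_mul_of_nonneg_right hC4 hB2
      _ ≤ (4 + 8*Mx/m0 + 4*Mx^2/m0^2) *
            ((if x ≤ 0 then Ml sK else Ml sL) * x^2 + mg * y^2) :=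
          mul_le_mul_of_nonneg_left (le_add_of_nonneg_left hA2) hCpos
  · -- large-t case
    have hyT : 2*|y| < |T| := hY
    rcases le_total sK sL with hKL | hKL
    · obtain ⟨ht0, hr0, I, hI0, h1, h2⟩ :=
        diss_integral m0 hm0 pc' Ml Mg hpc'_cont hpc'_neg hMl_cont hMg_cont
          hMl_nonneg hMg_nonneg hMl_mono hMg_anti hM_lower ptilde pbar
          hptilde hpbar sK sL hsK hsL hKL
      have ht0' : 0 ≤ T := ht0
      have hTabs : |T| = T := abs_of_nonneg ht0'
      have htpos : 0 < T := by
        have := abs_nonneg y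
        rw [hTabs] at hyT; linarith
      have hyb : |y| < T/2 := by rw [hTabs] at hyT; linarith
      have hyb2 : -(T/2) < y ∧ y < T/2 := abs_lt.1 hyb
      have hr0' : (0:ℝ) ≤ pbar sK - pbar sL := hr0
      have hxval : x = y + T + (pbar sK - pbar sL) := by linarith [hrel]
      have hxpos : 0 < x := by
        have := hyb2.1
        linarith
      have hml_if : (if x ≤ 0 then Ml sK else Ml sL) = Ml sL :=
        if_neg (not_le.2 hxpos)
      rw [hml_if]
      have habs : T/2 + (pbar sK - pbar sL) ≤ |x| := by
        rw [abs_of_pos hxpos]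
        have := hyb2.1
        linarith
      exact diss_alg m0 Mx T (pbar sK - pbar sL) I (Ml sL) (Mg sL) mg x y hm0
        hMx htpos hr0 hI0
        h1 h2 (hM_lower sL hsL) (hMl_nonneg sL hsL) hmg0 hmgU habs
    · obtain ⟨ht0, hr0, I, hI0, h1, h2⟩ :=
        diss_integral m0 hm0 pc' Ml Mg hpc'_cont hpc'_neg hMl_cont hMg_cont
          hMl_nonneg hMg_nonneg hMl_mono hMg_anti hM_lower ptilde pbar
          hptilde hpbar sL sK hsL hsK hKL
      have ht0' : (0:ℝ) ≤ ptilde sK - ptilde sL := ht0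
      have hr0' : (0:ℝ) ≤ pbar sL - pbar sK := hr0
      have hTabs : |T| = ptilde sK - ptilde sL := by
        have hT0 : T ≤ 0 := by rw [hTdef]; linarith
        rw [abs_of_nonpos hT0, hTdef]; ring
      have htpos : 0 < ptilde sK - ptilde sL := by
        have := abs_nonneg y
        rw [hTabs] at hyT; linarith
      have hyb2 : -((ptilde sK - ptilde sL)/2) < y ∧ y < (ptilde sK - ptilde sL)/2 := by
        refine abs_lt.1 ?_
        rw [hTabs] at hyT; linarith
      have hxval : x = y - (ptilde sK - ptilde sL) - (pbar sL - pbar sK) := by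
        rw [hTdef] at hrel; linarith [hrel]
      have hxneg : x < 0 := by
        have := hyb2.2
        linarith
      have hml_if : (if x ≤ 0 then Ml sK else Ml sL) = Ml sK := if_pos hxneg.le
      rw [hml_if]
      have habs : (ptilde sK - ptilde sL)/2 + (pbar sL - pbar sK) ≤ |x| := by
        rw [abs_of_neg hxneg]
        have := hyb2.2
        linarith
      have hTsq : T^2 = (ptilde sK - ptilde sL)^2 := by rw [hTdef]; ring
      rw [hTsq]
      exact diss_alg m0 Mx (ptilde sK - ptilde sL) (pbar sL - pbar sK) I
        (Ml sK) (Mg sK) mg x y hm0 hMx htpos hr0 hI0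
        h1 h2 (hM_lower sK hsK) (hMl_nonneg sK hsK) hmg0 hmgU habs
end

section
/- Under the global-pressure framework, if for a given choice of discrete interface data the upwind choices of the two phases differ — that is, either (p_{l,L} − p_{l,K} > 0 and p_{g,L} − p_{g,K} ≤ 0) or (p_{l,L} − p_{l,K} ≤ 0 and p_{g,L} − p_{g,K} > 0) — then for each phase α ∈ {l,g} the upwind interface mobility attains the maximum of M_α over the saturation interval: M_{α,KL} = max(M_α(s_K), M_α(s_L)) = max of M_α over the closed interval with endpoints s_K and s_L. -/
/-- Under the global-pressure framework, if for a given choice of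
discrete interface data the upwind choices of the two phases differ, then for each
phase `α ∈ {l,g}` the upwind interface mobility attains the maximum of `M_α` over
the saturation interval:
`M_{α,KL} = max(M_α(s_K), M_α(s_L)) =` max of `M_α` over the closed interval with
endpoints `s_K` and `s_L`. -/
theorem upwind_mobility_is_max_when_choices_differ
    -- global-pressure framework
    (m0 : ℝ) (hm0 : 0 < m0)
    (pc pc' Ml Mg : ℝ → ℝ)
    (hpc_deriv : ∀ s ∈ Set.Icc (0:ℝ) 1, HasDerivWithinAt pc (pc' s) (Set.Icc 0 1) s)
    (hpc'_cont : ContinuousOn pc' (Set.Icc 0 1))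
    (hpc'_neg : ∀ s ∈ Set.Icc (0:ℝ) 1, pc' s < 0)
    (hMl_cont : ContinuousOn Ml (Set.Icc 0 1))
    (hMg_cont : ContinuousOn Mg (Set.Icc 0 1))
    (hMl_nonneg : ∀ s ∈ Set.Icc (0:ℝ) 1, 0 ≤ Ml s)
    (hMg_nonneg : ∀ s ∈ Set.Icc (0:ℝ) 1, 0 ≤ Mg s)
    (hMl_mono : MonotoneOn Ml (Set.Icc 0 1))
    (hMg_anti : AntitoneOn Mg (Set.Icc 0 1))
    (hM_lower : ∀ s ∈ Set.Icc (0:ℝ) 1, m0 ≤ Ml s + Mg s)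
    (ptilde pbar B : ℝ → ℝ)
    (hptilde : ∀ s, ptilde s = -∫ z in (0:ℝ)..s, Ml z / (Ml z + Mg z) * pc' z)
    (hpbar : ∀ s, pbar s = ∫ z in (0:ℝ)..s, Mg z / (Ml z + Mg z) * pc' z)
    (hB : ∀ s, B s = -∫ z in (0:ℝ)..s, Ml z * Mg z / (Ml z + Mg z) * pc' z)
    -- discrete interface data
    (sK sL : ℝ) (hsK : sK ∈ Set.Icc (0:ℝ) 1) (hsL : sL ∈ Set.Icc (0:ℝ) 1)
    (plK plL pgK pgL : ℝ)
    (hcapK : pgK - plK = pbar sK - ptilde sK)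
    (hcapL : pgL - plL = pbar sL - ptilde sL)
    (MlKL MgKL : ℝ)
    (hMlKL : MlKL = if plL - plK ≤ 0 then Ml sK else Ml sL)
    (hMgKL : MgKL = if pgL - pgK ≤ 0 then Mg sK else Mg sL)
    -- the upwind choices of the two phases differ
    (hdiffer : (0 < plL - plK ∧ pgL - pgK ≤ 0) ∨ (plL - plK ≤ 0 ∧ 0 < pgL - pgK)) :
    (MlKL = max (Ml sK) (Ml sL) ∧ ∀ s ∈ Set.uIcc sK sL, Ml s ≤ MlKL) ∧
    (MgKL = max (Mg sK) (Mg sL) ∧ ∀ s ∈ Set.uIcc sK sL, Mg s ≤ MgKL) := by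
  have hMpos : ∀ z ∈ Set.Icc (0:ℝ) 1, 0 < Ml z + Mg z := fun z hz =>
    lt_of_lt_of_le hm0 (hM_lower z hz)
  -- pbar s - ptilde s = ∫₀ˢ pc'
  have hint : ∀ s ∈ Set.Icc (0:ℝ) 1, pbar s - ptilde s = ∫ z in (0:ℝ)..s, pc' z := by
    intro s hs
    have hsub : Set.uIcc (0:ℝ) s ⊆ Set.Icc 0 1 :=
      Set.uIcc_subset_Icc ⟨le_refl 0, zero_le_one⟩ hs
    have hMne : ∀ z ∈ Set.uIcc (0:ℝ) s, Ml z + Mg z ≠ 0 :=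
      fun z hz => ne_of_gt (hMpos z (hsub hz))
    have hcden : ContinuousOn (fun z => Ml z + Mg z) (Set.uIcc (0:ℝ) s) :=
      (hMl_cont.mono hsub).add (hMg_cont.mono hsub)
    have h1 : IntervalIntegrable (fun z => Mg z / (Ml z + Mg z) * pc' z)
        MeasureTheory.volume 0 s :=
      (((hMg_cont.mono hsub).div hcden hMne).mul (hpc'_cont.mono hsub)).intervalIntegrable
    have h2 : IntervalIntegrable (fun z => Ml z / (Ml z + Mg z) * pc' z)
        MeasureTheory.volume 0 s :=
      (((hMl_cont.mono hsub).div hcden hMne).mul (hpc'_cont.mono hsub)).intervalIntegrable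
    rw [hpbar, hptilde, sub_neg_eq_add, ← intervalIntegral.integral_add h1 h2]
    apply intervalIntegral.integral_congr
    intro z hz
    have h := hMne z hz
    field_simp
    ring
  have hpcint : ∀ a b : ℝ, a ∈ Set.Icc (0:ℝ) 1 → b ∈ Set.Icc (0:ℝ) 1 →
      IntervalIntegrable pc' MeasureTheory.volume a b := fun a b ha hb =>
    (hpc'_cont.mono (Set.uIcc_subset_Icc ha hb)).intervalIntegrable
  have hδ : (pgL - pgK) - (plL - plK) = ∫ z in sK..sL, pc' z := by
    have := intervalIntegral.integral_interval_sub_left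
      (hpcint 0 sL ⟨le_refl 0, zero_le_one⟩ hsL) (hpcint 0 sK ⟨le_refl 0, zero_le_one⟩ hsK)
    have e1 := hint sK hsK
    have e2 := hint sL hsL
    linarith [hcapK, hcapL]
  -- sign of the integral determines the order
  have key : ∀ a b : ℝ, a ∈ Set.Icc (0:ℝ) 1 → b ∈ Set.Icc (0:ℝ) 1 →
      (∫ z in a..b, pc' z) < 0 → a ≤ b := by
    intro a b ha hb h
    by_contra hab
    push_neg at hab
    have hsub : Set.Icc b a ⊆ Set.Icc (0:ℝ) 1 := Set.Icc_subset_Icc hb.1 ha.2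
    have hnn : (0:ℝ) ≤ ∫ z in b..a, -pc' z :=
      intervalIntegral.integral_nonneg hab.le (fun z hz => by linarith [hpc'_neg z (hsub hz)])
    rw [intervalIntegral.integral_neg] at hnn
    have hnp : (∫ z in b..a, pc' z) ≤ 0 := by linarith
    rw [intervalIntegral.integral_symm] at hnp
    linarith
  rcases hdiffer with ⟨hl, hg⟩ | ⟨hl, hg⟩
  · -- pl increases, pg decreases ⇒ sK ≤ sL
    have hKL : sK ≤ sL := key sK sL hsK hsL (by linarith)
    have huIcc : Set.uIcc sK sL = Set.Icc sK sL := Set.uIcc_of_le hKL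
    have hmem : ∀ s ∈ Set.Icc sK sL, s ∈ Set.Icc (0:ℝ) 1 := fun s hs =>
      ⟨le_trans hsK.1 hs.1, le_trans hs.2 hsL.2⟩
    refine ⟨⟨?_, ?_⟩, ⟨?_, ?_⟩⟩
    · rw [hMlKL, if_neg (not_le.mpr hl), max_eq_right (hMl_mono hsK hsL hKL)]
    · intro s hs
      rw [huIcc] at hs
      rw [hMlKL, if_neg (not_le.mpr hl)]
      exact hMl_mono (hmem s hs) hsL hs.2
    · rw [hMgKL, if_pos hg, max_eq_left (hMg_anti hsK hsL hKL)]
    · intro s hs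
      rw [huIcc] at hs
      rw [hMgKL, if_pos hg]
      exact hMg_anti hsK (hmem s hs) hs.1
  · -- pl decreases, pg increases ⇒ sL ≤ sK
    have hKL : sL ≤ sK := by
      apply key sL sK hsL hsK
      rw [intervalIntegral.integral_symm]
      linarith
    have huIcc : Set.uIcc sK sL = Set.Icc sL sK := Set.uIcc_of_ge hKL
    have hmem : ∀ s ∈ Set.Icc sL sK, s ∈ Set.Icc (0:ℝ) 1 := fun s hs =>
      ⟨le_trans hsL.1 hs.1, le_trans hs.2 hsK.2⟩
    refine ⟨⟨?_, ?_⟩, ⟨?_, ?_⟩⟩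
    · rw [hMlKL, if_pos hl, max_eq_left (hMl_mono hsL hsK hKL)]
    · intro s hs
      rw [huIcc] at hs
      rw [hMlKL, if_pos hl]
      exact hMl_mono (hmem s hs) hsK hs.2
    · rw [hMgKL, if_neg (not_le.mpr hg), max_eq_right (hMg_anti hsL hsK hKL)]
    · intro s hs
      rw [huIcc] at hs
      rw [hMgKL, if_neg (not_le.mpr hg)]
      exact hMg_anti hsL (hmem s hs) hs.1
end

section
/- Energy inequality for the discrete time derivative: for all saturations s_l, s_g, s_l*, s_g* ≥ 0 with s_l + s_g = 1 and s_l* + s_g* = 1, and all real pressures p_l, p_g, p_l*, p_g* satisfying the capillary relation p_g − p_l = p_c(s_l), one has (ρ_l(p_l)·s_l − ρ_l(p_l*)·s_l*)·g_l(p_l) + (ρ_g(p_g)·s_g − ρ_g(p_g*)·s_g*)·g_g(p_g) ≥ H_l(p_l)·s_l − H_l(p_l*)·s_l* + H_g(p_g)·s_g − H_g(p_g*)·s_g* − P_c(s_l) + P_c(s_l*). -/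
/-- Concavity-type estimate for g(p) = ∫₀ᵖ 1/ρ. -/
lemma g_concave_est (ρ : ℝ → ℝ) (ρm : ℝ) (hρm : 0 < ρm)
    (hmono : Monotone ρ) (hlow : ∀ z, ρm ≤ ρ z) (a b : ℝ) :
    (∫ z in b..a, 1 / ρ z) ≤ (a - b) / ρ b := by
  have hpos : ∀ z, 0 < ρ z := fun z => lt_of_lt_of_le hρm (hlow z)
  have hanti : Antitone (fun z => 1 / ρ z) := by
    intro x y hxy
    exact one_div_le_one_div_of_le (hpos x) (hmono hxy)
  have hint : ∀ u v : ℝ, IntervalIntegrable (fun z => 1 / ρ z) MeasureTheory.volume u v :=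
    fun u v => hanti.intervalIntegrable
  rcases le_total b a with h | h
  · have : (∫ z in b..a, 1 / ρ z) ≤ ∫ z in b..a, 1 / ρ b := by
      apply intervalIntegral.integral_mono_on h (hint b a) intervalIntegrable_const
      intro x hx
      exact hanti hx.1
    rw [intervalIntegral.integral_const, smul_eq_mul] at this
    calc (∫ z in b..a, 1 / ρ z) ≤ (a - b) * (1 / ρ b) := this
      _ = (a - b) / ρ b := by ring
  · rw [intervalIntegral.integral_symm]
    have : (∫ z in a..b, 1 / ρ b) ≤ ∫ z in a..b, 1 / ρ z := by
      apply intervalIntegral.integral_mono_on h intervalIntegrable_const (hint a b)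
      intro x hx
      exact hanti hx.2
    rw [intervalIntegral.integral_const, smul_eq_mul] at this
    have h2 : (b - a) * (1 / ρ b) ≤ ∫ z in a..b, 1 / ρ z := this
    have := neg_le_neg h2
    calc -(∫ z in a..b, 1 / ρ z) ≤ -((b - a) * (1 / ρ b)) := this
      _ = (a - b) / ρ b := by ring

/-- Concavity-type estimate for Pc. -/
lemma Pc_concave_est (pc : ℝ → ℝ) (hanti : AntitoneOn pc (Set.Icc 0 1))
    (a b : ℝ) (ha : a ∈ Set.Icc (0:ℝ) 1) (hb : b ∈ Set.Icc (0:ℝ) 1) :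
    (∫ z in a..b, pc z) ≤ pc a * (b - a) := by
  have hsub : ∀ u v : ℝ, u ∈ Set.Icc (0:ℝ) 1 → v ∈ Set.Icc (0:ℝ) 1 →
      Set.uIcc u v ⊆ Set.Icc (0:ℝ) 1 := by
    intro u v hu hv
    rw [show Set.Icc (0:ℝ) 1 = Set.uIcc 0 1 from (Set.uIcc_of_le (by norm_num)).symm]
    exact Set.uIcc_subset_uIcc (by simpa [Set.uIcc_of_le (by norm_num : (0:ℝ) ≤ 1)] using hu)
      (by simpa [Set.uIcc_of_le (by norm_num : (0:ℝ) ≤ 1)] using hv)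
  have hint : ∀ u v : ℝ, u ∈ Set.Icc (0:ℝ) 1 → v ∈ Set.Icc (0:ℝ) 1 →
      IntervalIntegrable pc MeasureTheory.volume u v := by
    intro u v hu hv
    exact (hanti.mono (hsub u v hu hv)).intervalIntegrable
  rcases le_total a b with h | h
  · have : (∫ z in a..b, pc z) ≤ ∫ z in a..b, pc a := by
      apply intervalIntegral.integral_mono_on h (hint a b ha hb) intervalIntegrable_const
      intro x hx
      exact hanti ha ⟨le_trans ha.1 hx.1, le_trans hx.2 hb.2⟩ hx.1
    rw [intervalIntegral.integral_const, smul_eq_mul] at this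
    calc (∫ z in a..b, pc z) ≤ (b - a) * pc a := this
      _ = pc a * (b - a) := by ring
  · rw [intervalIntegral.integral_symm]
    have : (∫ z in b..a, pc a) ≤ ∫ z in b..a, pc z := by
      apply intervalIntegral.integral_mono_on h intervalIntegrable_const (hint b a hb ha)
      intro x hx
      exact hanti ⟨le_trans hb.1 hx.1, le_trans hx.2 ha.2⟩ ha hx.2
    rw [intervalIntegral.integral_const, smul_eq_mul] at this
    have := neg_le_neg this
    calc -(∫ z in b..a, pc z) ≤ -((a - b) * pc a) := this
      _ = pc a * (b - a) := by ring



/-- Energy inequality for the discrete time derivative: for all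
saturations `s_l, s_g, s_l*, s_g* ≥ 0` with `s_l + s_g = 1`, `s_l* + s_g* = 1`,
and all real pressures `p_l, p_g, p_l*, p_g*` satisfying the capillary relation
`p_g − p_l = p_c(s_l)`, one has
`(ρ_l(p_l)s_l − ρ_l(p_l*)s_l*)g_l(p_l) + (ρ_g(p_g)s_g − ρ_g(p_g*)s_g*)g_g(p_g)
  ≥ H_l(p_l)s_l − H_l(p_l*)s_l* + H_g(p_g)s_g − H_g(p_g*)s_g* − P_c(s_l) + P_c(s_l*)`. -/
theorem discrete_time_derivative_energy_inequality
    (ρl ρg : ℝ → ℝ) (ρm : ℝ) (hρm : 0 < ρm)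
    (hρl_smooth : ContDiff ℝ 1 ρl) (hρg_smooth : ContDiff ℝ 1 ρg)
    (hρl_mono : Monotone ρl) (hρg_mono : Monotone ρg)
    (hρl_low : ∀ z, ρm ≤ ρl z) (hρg_low : ∀ z, ρm ≤ ρg z)
    (gl gg Hl Hg : ℝ → ℝ)
    (hgl : ∀ p, gl p = ∫ z in (0:ℝ)..p, 1 / ρl z)
    (hgg : ∀ p, gg p = ∫ z in (0:ℝ)..p, 1 / ρg z)
    (hHl : ∀ p, Hl p = ρl p * gl p - p)
    (hHg : ∀ p, Hg p = ρg p * gg p - p)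
    (pc Pc : ℝ → ℝ)
    (hpc_cont : ContinuousOn pc (Set.Icc 0 1))
    (hpc_anti : AntitoneOn pc (Set.Icc 0 1))
    (hPc : ∀ s, Pc s = ∫ z in (0:ℝ)..s, pc z)
    (sl sg sl' sg' : ℝ)
    (hsl : 0 ≤ sl) (hsg : 0 ≤ sg) (hsl' : 0 ≤ sl') (hsg' : 0 ≤ sg')
    (hsum : sl + sg = 1) (hsum' : sl' + sg' = 1)
    (pl pg pl' pg' : ℝ)
    (hcap : pg - pl = pc sl) :
    Hl pl * sl - Hl pl' * sl' + Hg pg * sg - Hg pg' * sg' - Pc sl + Pc sl'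
      ≤ (ρl pl * sl - ρl pl' * sl') * gl pl
        + (ρg pg * sg - ρg pg' * sg') * gg pg := by
  have hposl : ∀ z, 0 < ρl z := fun z => lt_of_lt_of_le hρm (hρl_low z)
  have hposg : ∀ z, 0 < ρg z := fun z => lt_of_lt_of_le hρm (hρg_low z)
  -- interval integrability
  have hintl : ∀ u v : ℝ, IntervalIntegrable (fun z => 1 / ρl z) MeasureTheory.volume u v := by
    intro u v
    have hanti : Antitone (fun z => 1 / ρl z) := fun x y hxy =>
      one_div_le_one_div_of_le (hposl x) (hρl_mono hxy)
    exact hanti.intervalIntegrable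
  have hintg : ∀ u v : ℝ, IntervalIntegrable (fun z => 1 / ρg z) MeasureTheory.volume u v := by
    intro u v
    have hanti : Antitone (fun z => 1 / ρg z) := fun x y hxy =>
      one_div_le_one_div_of_le (hposg x) (hρg_mono hxy)
    exact hanti.intervalIntegrable
  -- difference of g as interval integral
  have hgl_diff : gl pl - gl pl' = ∫ z in pl'..pl, 1 / ρl z := by
    rw [hgl, hgl]
    rw [← intervalIntegral.integral_add_adjacent_intervals (hintl 0 pl') (hintl pl' pl)]
    ring
  have hgg_diff : gg pg - gg pg' = ∫ z in pg'..pg, 1 / ρg z := by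
    rw [hgg, hgg]
    rw [← intervalIntegral.integral_add_adjacent_intervals (hintg 0 pg') (hintg pg' pg)]
    ring
  -- concavity estimates for g
  have hA : gl pl - gl pl' ≤ (pl - pl') / ρl pl' := by
    rw [hgl_diff]; exact g_concave_est ρl ρm hρm hρl_mono hρl_low pl pl'
  have hB : gg pg - gg pg' ≤ (pg - pg') / ρg pg' := by
    rw [hgg_diff]; exact g_concave_est ρg ρm hρm hρg_mono hρg_low pg pg'
  have h1 : ρl pl' * (gl pl - gl pl') ≤ pl - pl' := by
    rw [mul_comm]; exact (le_div_iff₀ (hposl pl')).mp hA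
  have h2 : ρg pg' * (gg pg - gg pg') ≤ pg - pg' := by
    rw [mul_comm]; exact (le_div_iff₀ (hposg pg')).mp hB
  have h1' : sl' * (ρl pl' * (gl pl - gl pl')) ≤ sl' * (pl - pl') :=
    mul_le_mul_of_nonneg_left h1 hsl'
  have h2' : sg' * (ρg pg' * (gg pg - gg pg')) ≤ sg' * (pg - pg') :=
    mul_le_mul_of_nonneg_left h2 hsg'
  -- Pc estimate
  have hsl_mem : sl ∈ Set.Icc (0:ℝ) 1 := ⟨hsl, by linarith⟩
  have hsl'_mem : sl' ∈ Set.Icc (0:ℝ) 1 := ⟨hsl', by linarith⟩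
  have hintpc : IntervalIntegrable pc MeasureTheory.volume sl sl' := by
    have hsub : Set.uIcc sl sl' ⊆ Set.Icc (0:ℝ) 1 := by
      rw [show Set.Icc (0:ℝ) 1 = Set.uIcc 0 1 from (Set.uIcc_of_le (by norm_num)).symm]
      exact Set.uIcc_subset_uIcc
        (by simpa [Set.uIcc_of_le (by norm_num : (0:ℝ) ≤ 1)] using hsl_mem)
        (by simpa [Set.uIcc_of_le (by norm_num : (0:ℝ) ≤ 1)] using hsl'_mem)
    exact (hpc_anti.mono hsub).intervalIntegrable
  have hintpc0 : ∀ u : ℝ, u ∈ Set.Icc (0:ℝ) 1 →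
      IntervalIntegrable pc MeasureTheory.volume 0 u := by
    intro u hu
    have hsub : Set.uIcc (0:ℝ) u ⊆ Set.Icc (0:ℝ) 1 := by
      rw [show Set.Icc (0:ℝ) 1 = Set.uIcc 0 1 from (Set.uIcc_of_le (by norm_num)).symm]
      exact Set.uIcc_subset_uIcc Set.left_mem_uIcc
        (by simpa [Set.uIcc_of_le (by norm_num : (0:ℝ) ≤ 1)] using hu)
    exact (hpc_anti.mono hsub).intervalIntegrable
  have hPc_diff : Pc sl' - Pc sl = ∫ z in sl..sl', pc z := by
    rw [hPc, hPc]
    rw [← intervalIntegral.integral_add_adjacent_intervals (hintpc0 sl hsl_mem) hintpc]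
    ring
  have h3 : Pc sl' - Pc sl ≤ pc sl * (sl' - sl) := by
    rw [hPc_diff]
    exact Pc_concave_est pc hpc_anti sl sl' hsl_mem hsl'_mem
  have h4 : (pg - pl) * (sl' - sl) = pc sl * (sl' - sl) := by rw [hcap]
  have h5 : pg * (sg - sg') = pg * (sl' - sl) := by
    have h : sg - sg' = sl' - sl := by linarith
    rw [h]
  rw [hHl, hHl, hHg, hHg]
  nlinarith [h1', h2', h3, h4, h5]
end

section
/- Maximum principle for the upwind finite volume scheme (one time step): suppose that for every cell K and each phase α ∈ {l,g} the scheme equation holds: |K|·φ_K·(ρ_α(p^{n+1}_{α,K})·s^{n+1}_{α,K} − ρ_α(p^{n}_{α,K})·s^{n}_{α,K})/δt + Σ_{L∈N(K)} τ_{KL}·ρ_{α,KL}·G_α(s^{n+1}_{α,K}, s^{n+1}_{α,L}; p^{n+1}_{α,L} − p^{n+1}_{α,K}) + F_{α,K} + |K|·ρ_α(p^{n+1}_{α,K})·s^{n+1}_{α,K}·f_{P,K} = |K|·ρ_α(p^{n+1}_{α,K})·s^I_{α,K}·f_{I,K}, where F_{α,K} = Σ_{L∈N(K)} σ_{KL}·(ρ_{α,KL})²·(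 M_α(s^{n+1}_{α,K})·g_{KL}⁺ − M_α(s^{n+1}_{α,L})·g_{KL}⁻ ). If the old saturations satisfy s^{n}_{α,K} ≥ 0 and s^{n}_{l,K} + s^{n}_{g,K} = 1 for every K, and the new saturations satisfy s^{n+1}_{l,K} + s^{n+1}_{g,K} = 1 for every K, then 0 ≤ s^{n+1}_{α,K} ≤ 1 for every cell K and both phases α. -/
/-- Maximum principle for the upwind finite volume scheme (one time
step). Cells are indexed by a nonempty finite type `ι`, the two phases by `Fin 2`.
If the scheme equations hold for every cell and phase, the old saturations are
nonnegative and sum to one, and the new saturations sum to one, then every new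
saturation lies in `[0,1]`. -/
theorem maximum_principle_upwind_scheme
    {ι : Type*} [Fintype ι] [Nonempty ι]
    -- mesh data
    (N : ι → Finset ι)
    (hN_symm : ∀ K L, L ∈ N K ↔ K ∈ N L)
    (hN_irrefl : ∀ K, K ∉ N K)
    (τ σ : ι → ι → ℝ)
    (hτ_pos : ∀ K L, L ∈ N K → 0 < τ K L)
    (hτ_symm : ∀ K L, L ∈ N K → τ K L = τ L K)
    (hσ_pos : ∀ K L, L ∈ N K → 0 < σ K L)
    (hσ_symm : ∀ K L, L ∈ N K → σ K L = σ L K)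
    (vol φ : ι → ℝ)
    (hvol_pos : ∀ K, 0 < vol K) (hφ_pos : ∀ K, 0 < φ K)
    (δt : ℝ) (hδt : 0 < δt)
    -- phase data
    (ρ : Fin 2 → ℝ → ℝ) (hρ_pos : ∀ α z, 0 < ρ α z)
    (ρKL : Fin 2 → ι → ι → ℝ)
    (hρKL_pos : ∀ α K L, L ∈ N K → 0 < ρKL α K L)
    (hρKL_symm : ∀ α K L, L ∈ N K → ρKL α K L = ρKL α L K)
    (M : Fin 2 → ℝ → ℝ)
    (hM_cont : ∀ α, Continuous (M α))
    (hM_mono : ∀ α, Monotone (M α))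
    (hM_nonneg : ∀ α x, 0 ≤ M α x)
    (hM_zero : ∀ α x, x ≤ 0 → M α x = 0)
    -- gravity data
    (g : ι → ι → ℝ) (hg_antisymm : ∀ K L, g K L = -g L K)
    -- source data
    (fP fI : ι → ℝ) (hfP : ∀ K, 0 ≤ fP K) (hfI : ∀ K, 0 ≤ fI K)
    (sI : Fin 2 → ι → ℝ) (hsI : ∀ α K, 0 ≤ sI α K)
    -- unknowns at the new time step and data at the old time step
    (pNew pOld sNew sOld : Fin 2 → ι → ℝ)
    -- the scheme equations
    (hscheme : ∀ α K,
      vol K * φ K *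
          (ρ α (pNew α K) * sNew α K - ρ α (pOld α K) * sOld α K) / δt
        + ∑ L ∈ N K, τ K L * ρKL α K L *
            (-(M α (sNew α L)) * max (pNew α L - pNew α K) 0
              + M α (sNew α K) * max (-(pNew α L - pNew α K)) 0)
        + ∑ L ∈ N K, σ K L * (ρKL α K L) ^ 2 *
            (M α (sNew α K) * max (g K L) 0 - M α (sNew α L) * max (-(g K L)) 0)
        + vol K * ρ α (pNew α K) * sNew α K * fP K
      = vol K * ρ α (pNew α K) * sI α K * fI K)
    -- old saturations
    (hOld_nonneg : ∀ α K, 0 ≤ sOld α K)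
    (hOld_sum : ∀ K, sOld 0 K + sOld 1 K = 1)
    -- new saturations occupy the whole pore space
    (hNew_sum : ∀ K, sNew 0 K + sNew 1 K = 1) :
    ∀ α K, 0 ≤ sNew α K ∧ sNew α K ≤ 1 := by
  have nonneg : ∀ α K, 0 ≤ sNew α K := by
    intro α K
    by_contra hneg
    push_neg at hneg
    have hM0 : M α (sNew α K) = 0 := hM_zero α _ hneg.le
    have hB : (∑ L ∈ N K, τ K L * ρKL α K L *
        (-(M α (sNew α L)) * max (pNew α L - pNew α K) 0
          + M α (sNew α K) * max (-(pNew α L - pNew α K)) 0)) ≤ 0 := by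
      apply Finset.sum_nonpos
      intro L hL
      have h1 := (hτ_pos K L hL).le
      have h2 := (hρKL_pos α K L hL).le
      have h3 := hM_nonneg α (sNew α L)
      have h4 : (0:ℝ) ≤ max (pNew α L - pNew α K) 0 := le_max_right _ _
      rw [hM0]
      nlinarith [mul_nonneg (mul_nonneg h1 h2) (mul_nonneg h3 h4)]
    have hC : (∑ L ∈ N K, σ K L * (ρKL α K L) ^ 2 *
        (M α (sNew α K) * max (g K L) 0 - M α (sNew α L) * max (-(g K L)) 0)) ≤ 0 := by
      apply Finset.sum_nonpos
      intro L hL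
      have h1 := (hσ_pos K L hL).le
      have h2 := (hρKL_pos α K L hL)
      have h3 := hM_nonneg α (sNew α L)
      have h4 : (0:ℝ) ≤ max (-(g K L)) 0 := le_max_right _ _
      rw [hM0]
      nlinarith [mul_nonneg (mul_nonneg h1 (sq_nonneg (ρKL α K L))) (mul_nonneg h3 h4)]
    have hρn := hρ_pos α (pNew α K)
    have hρo := hρ_pos α (pOld α K)
    have hso := hOld_nonneg α K
    have hA : vol K * φ K *
        (ρ α (pNew α K) * sNew α K - ρ α (pOld α K) * sOld α K) / δt < 0 := by
      apply div_neg_of_neg_of_pos _ hδt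
      have hx : ρ α (pNew α K) * sNew α K - ρ α (pOld α K) * sOld α K < 0 := by
        nlinarith
      nlinarith [mul_pos (hvol_pos K) (hφ_pos K)]
    have hD : vol K * ρ α (pNew α K) * sNew α K * fP K ≤ 0 := by
      apply mul_nonpos_of_nonpos_of_nonneg _ (hfP K)
      nlinarith [mul_pos (hvol_pos K) hρn]
    have hE : 0 ≤ vol K * ρ α (pNew α K) * sI α K * fI K :=
      mul_nonneg (mul_nonneg (mul_nonneg (hvol_pos K).le hρn.le) (hsI α K)) (hfI K)
    have h := hscheme α K
    linarith
  intro α K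
  refine ⟨nonneg α K, ?_⟩
  have h0 := nonneg 0 K
  have h1 := nonneg 1 K
  have hsum := hNew_sum K
  fin_cases α <;> simp only [Fin.mk_zero, Fin.mk_one, Fin.isValue] <;> linarith
end

section
/- Hölder approximation of the function Γ: assume in addition that B is strictly increasing on [0,1] and that its inverse B⁻¹ : [0, B(1)] → [0,1] is Hölder continuous of order θ ∈ (0,1] with constant c (i.e. |B⁻¹(x) − B⁻¹(y)| ≤ c·|x − y|^θ for all x, y ∈ [0, B(1)]). Define Γ(s) = ∫₀ˢ √(M_l(z))·p̄'(z) dz. Then there exists a constant C > 0, depending only on M_l, M_g, p_c, c and θ, such that for all s_K, s_L ∈ [0,1] and every s* lying in the closed interval with endpoints s_K and s_L: |Γ(s_L) − Γ(s_K) − √(M_l(s*))·(p̄(s_L) − p̄(s_K))| ≤ C·|B(s_L) − B(s_K)|^θ. -/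
/-- Hölder approximation of the function `Γ`: assume in addition that
`B` is strictly increasing on `[0,1]` and that its inverse
`B⁻¹ : [0,B(1)] → [0,1]` is Hölder continuous of order `θ ∈ (0,1]` with constant
`c`. Define `Γ(s) = ∫₀ˢ √(M_l(z))·p̄'(z) dz` (with `p̄'(z) = (M_g(z)/M(z))·p_c'(z)`).
Then there exists `C > 0`, depending only on `M_l, M_g, p_c, c, θ`, such that for
all `s_K, s_L ∈ [0,1]` and every `s*` in the closed interval with endpoints
`s_K, s_L`:
`|Γ(s_L) − Γ(s_K) − √(M_l(s*))·(p̄(s_L) − p̄(s_K))| ≤ C·|B(s_L) − B(s_K)|^θ`. -/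
theorem holder_approximation_Gamma
    -- global-pressure framework
    (m0 : ℝ) (hm0 : 0 < m0)
    (pc pc' Ml Mg : ℝ → ℝ)
    (hpc_deriv : ∀ s ∈ Set.Icc (0:ℝ) 1, HasDerivWithinAt pc (pc' s) (Set.Icc 0 1) s)
    (hpc'_cont : ContinuousOn pc' (Set.Icc 0 1))
    (hpc'_neg : ∀ s ∈ Set.Icc (0:ℝ) 1, pc' s < 0)
    (hMl_cont : ContinuousOn Ml (Set.Icc 0 1))
    (hMg_cont : ContinuousOn Mg (Set.Icc 0 1))
    (hMl_nonneg : ∀ s ∈ Set.Icc (0:ℝ) 1, 0 ≤ Ml s)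
    (hMg_nonneg : ∀ s ∈ Set.Icc (0:ℝ) 1, 0 ≤ Mg s)
    (hMl_mono : MonotoneOn Ml (Set.Icc 0 1))
    (hMg_anti : AntitoneOn Mg (Set.Icc 0 1))
    (hM_lower : ∀ s ∈ Set.Icc (0:ℝ) 1, m0 ≤ Ml s + Mg s)
    (ptilde pbar B : ℝ → ℝ)
    (hptilde : ∀ s, ptilde s = -∫ z in (0:ℝ)..s, Ml z / (Ml z + Mg z) * pc' z)
    (hpbar : ∀ s, pbar s = ∫ z in (0:ℝ)..s, Mg z / (Ml z + Mg z) * pc' z)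
    (hB : ∀ s, B s = -∫ z in (0:ℝ)..s, Ml z * Mg z / (Ml z + Mg z) * pc' z)
    -- B is strictly increasing with a θ-Hölder inverse on [0, B(1)]
    (hB_strictMono : StrictMonoOn B (Set.Icc 0 1))
    (Binv : ℝ → ℝ) (θ c : ℝ) (hθ : θ ∈ Set.Ioc (0:ℝ) 1) (hc : 0 < c)
    (hBinv : ∀ s ∈ Set.Icc (0:ℝ) 1, Binv (B s) = s)
    (hBinv_holder : ∀ x ∈ Set.Icc (0:ℝ) (B 1), ∀ y ∈ Set.Icc (0:ℝ) (B 1),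
      |Binv x - Binv y| ≤ c * |x - y| ^ θ)
    -- the function Γ
    (Γ : ℝ → ℝ)
    (hΓ : ∀ s, Γ s = ∫ z in (0:ℝ)..s,
      Real.sqrt (Ml z) * (Mg z / (Ml z + Mg z) * pc' z)) :
    ∃ C : ℝ, 0 < C ∧
      ∀ sK ∈ Set.Icc (0:ℝ) 1, ∀ sL ∈ Set.Icc (0:ℝ) 1,
        ∀ sStar ∈ Set.uIcc sK sL,
          |Γ sL - Γ sK - Real.sqrt (Ml sStar) * (pbar sL - pbar sK)|
            ≤ C * |B sL - B sK| ^ θ := by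

  have hM_pos : ∀ s ∈ Set.Icc (0:ℝ) 1, 0 < Ml s + Mg s :=
    fun s hs => lt_of_lt_of_le hm0 (hM_lower s hs)
  set g : ℝ → ℝ := fun z => Mg z / (Ml z + Mg z) * pc' z with hg_def
  set f : ℝ → ℝ := fun z => Real.sqrt (Ml z) * (Mg z / (Ml z + Mg z) * pc' z) with hf_def
  have hg_cont : ContinuousOn g (Set.Icc 0 1) :=
    (hMg_cont.div (hMl_cont.add hMg_cont) (fun s hs => (hM_pos s hs).ne')).mul hpc'_cont
  have hf_cont : ContinuousOn f (Set.Icc 0 1) :=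
    (Real.continuous_sqrt.comp_continuousOn hMl_cont).mul hg_cont
  obtain ⟨Cp, hCp⟩ := isCompact_Icc.exists_bound_of_continuousOn hpc'_cont
  have hCp0 : 0 ≤ Cp := le_trans (norm_nonneg _) (hCp 0 ⟨le_refl _, zero_le_one⟩)
  set K := Real.sqrt (Ml 1) * Cp * c with hK_def
  have hK0 : 0 ≤ K := mul_nonneg (mul_nonneg (Real.sqrt_nonneg _) hCp0) hc.le
  refine ⟨K + 1, by linarith, ?_⟩
  intro sK hsK sL hsL sStar hsStar
  have hsub : Set.uIcc sK sL ⊆ Set.Icc 0 1 := Set.uIcc_subset_Icc hsK hsL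
  have hsStar' : sStar ∈ Set.Icc (0:ℝ) 1 := hsub hsStar
  have h01 : (0:ℝ) ∈ Set.Icc (0:ℝ) 1 := ⟨le_refl _, zero_le_one⟩
  have h11 : (1:ℝ) ∈ Set.Icc (0:ℝ) 1 := ⟨zero_le_one, le_refl _⟩
  have hintf : ∀ a ∈ Set.Icc (0:ℝ) 1, ∀ b ∈ Set.Icc (0:ℝ) 1,
      IntervalIntegrable f MeasureTheory.volume a b := fun a ha b hb =>
    (hf_cont.mono (Set.uIcc_subset_Icc ha hb)).intervalIntegrable
  have hintg : ∀ a ∈ Set.Icc (0:ℝ) 1, ∀ b ∈ Set.Icc (0:ℝ) 1,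
      IntervalIntegrable g MeasureTheory.volume a b := fun a ha b hb =>
    (hg_cont.mono (Set.uIcc_subset_Icc ha hb)).intervalIntegrable
  have hΓdiff : Γ sL - Γ sK = ∫ z in sK..sL, f z := by
    rw [hΓ, hΓ]
    exact intervalIntegral.integral_interval_sub_left (hintf 0 h01 sL hsL) (hintf 0 h01 sK hsK)
  have hpdiff : pbar sL - pbar sK = ∫ z in sK..sL, g z := by
    rw [hpbar, hpbar]
    exact intervalIntegral.integral_interval_sub_left (hintg 0 h01 sL hsL) (hintg 0 h01 sK hsK)
  have key : Γ sL - Γ sK - Real.sqrt (Ml sStar) * (pbar sL - pbar sK)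
      = ∫ z in sK..sL, (f z - Real.sqrt (Ml sStar) * g z) := by
    rw [hΓdiff, hpdiff, intervalIntegral.integral_sub (hintf sK hsK sL hsL)
      ((hintg sK hsK sL hsL).const_mul _), intervalIntegral.integral_const_mul]
  have hbound : ∀ x ∈ Set.uIoc sK sL,
      ‖f x - Real.sqrt (Ml sStar) * g x‖ ≤ Real.sqrt (Ml 1) * Cp := by
    intro x hx
    have hx' : x ∈ Set.Icc (0:ℝ) 1 := hsub (Set.uIoc_subset_uIcc hx)
    have h1 : |Real.sqrt (Ml x) - Real.sqrt (Ml sStar)| ≤ Real.sqrt (Ml 1) := by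
      have hx1 : Real.sqrt (Ml x) ≤ Real.sqrt (Ml 1) :=
        Real.sqrt_le_sqrt (hMl_mono hx' h11 hx'.2)
      have hs1 : Real.sqrt (Ml sStar) ≤ Real.sqrt (Ml 1) :=
        Real.sqrt_le_sqrt (hMl_mono hsStar' h11 hsStar'.2)
      have hxn := Real.sqrt_nonneg (Ml x)
      have hsn := Real.sqrt_nonneg (Ml sStar)
      rw [abs_sub_le_iff]
      constructor <;> linarith
    have h2 : |g x| ≤ Cp := by
      have hMx := hM_pos x hx'
      have hd : |Mg x / (Ml x + Mg x)| ≤ 1 := by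
        rw [abs_of_nonneg (div_nonneg (hMg_nonneg x hx') hMx.le)]
        exact div_le_one_of_le₀ (le_add_of_nonneg_left (hMl_nonneg x hx')) hMx.le
      have hp : |pc' x| ≤ Cp := by
        have := hCp x hx'; rwa [Real.norm_eq_abs] at this
      calc |g x| = |Mg x / (Ml x + Mg x)| * |pc' x| := abs_mul _ _
        _ ≤ 1 * Cp := mul_le_mul hd hp (abs_nonneg _) zero_le_one
        _ = Cp := one_mul _
    have heq : f x - Real.sqrt (Ml sStar) * g x
        = (Real.sqrt (Ml x) - Real.sqrt (Ml sStar)) * g x := by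
      simp only [hf_def, hg_def]; ring
    rw [heq, Real.norm_eq_abs, abs_mul]
    exact mul_le_mul h1 h2 (abs_nonneg _) (Real.sqrt_nonneg _)
  have hint : ‖∫ z in sK..sL, (f z - Real.sqrt (Ml sStar) * g z)‖
      ≤ Real.sqrt (Ml 1) * Cp * |sL - sK| :=
    intervalIntegral.norm_integral_le_of_norm_le_const hbound
  have hB0 : B 0 = 0 := by rw [hB]; simp
  have hBmono : MonotoneOn B (Set.Icc (0:ℝ) 1) := hB_strictMono.monotoneOn
  have hBmem : ∀ s ∈ Set.Icc (0:ℝ) 1, B s ∈ Set.Icc (0:ℝ) (B 1) := fun s hs =>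
    ⟨hB0 ▸ hBmono h01 hs hs.1, hBmono hs h11 hs.2⟩
  have hs_holder : |sL - sK| ≤ c * |B sL - B sK| ^ θ := by
    have := hBinv_holder (B sL) (hBmem sL hsL) (B sK) (hBmem sK hsK)
    rwa [hBinv sL hsL, hBinv sK hsK] at this
  have hpow : 0 ≤ |B sL - B sK| ^ θ := Real.rpow_nonneg (abs_nonneg _) θ
  have h2 : Real.sqrt (Ml 1) * Cp * |sL - sK| ≤ K * |B sL - B sK| ^ θ := by
    calc Real.sqrt (Ml 1) * Cp * |sL - sK|
        ≤ Real.sqrt (Ml 1) * Cp * (c * |B sL - B sK| ^ θ) :=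
          mul_le_mul_of_nonneg_left hs_holder (mul_nonneg (Real.sqrt_nonneg _) hCp0)
      _ = K * |B sL - B sK| ^ θ := by rw [hK_def]; ring
  rw [key, ← Real.norm_eq_abs]
  nlinarith [hint, h2, hpow]
end

section
/- Interface density identity: let ρ : ℝ → ℝ be continuous with 0 < ρ_m ≤ ρ(z) ≤ ρ_M for all z, let g(p) = ∫₀ᵖ (1/ρ(z)) dz, and for real numbers p_K ≠ p_L define the interface density ρ_{KL} by 1/ρ_{KL} = (1/(p_L − p_K))·∫_{p_K}^{p_L} (1/ρ(ζ)) dζ (and ρ_{KL} = ρ(p_K) if p_K = p_L). Then ρ_{KL} is well defined with ρ_m ≤ ρ_{KL} ≤ ρ_M, and for all p_K, p_L ∈ ℝ one has ρ_{KL}·(g(p_K) − g(p_L)) = p_K − p_L. -/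
lemma mean_bound (ρ : ℝ → ℝ) (ρm ρM : ℝ) (hρm : 0 < ρm)
    (hρ_cont : Continuous ρ)
    (hρ_low : ∀ z, ρm ≤ ρ z) (hρ_up : ∀ z, ρ z ≤ ρM)
    {a b : ℝ} (hab : a < b) :
    ρM⁻¹ ≤ (1 / (b - a)) * ∫ ζ in a..b, 1 / ρ ζ ∧
    (1 / (b - a)) * ∫ ζ in a..b, 1 / ρ ζ ≤ ρm⁻¹ := by
  have hρM : 0 < ρM := lt_of_lt_of_le hρm ((hρ_low 0).trans (hρ_up 0))
  have hpos : ∀ z, (0:ℝ) < ρ z := fun z => lt_of_lt_of_le hρm (hρ_low z)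
  have hcont : Continuous (fun z => 1 / ρ z) :=
    by exact continuous_const.div hρ_cont (fun z => ne_of_gt (hpos z))
  have hint : IntervalIntegrable (fun z => 1 / ρ z) MeasureTheory.volume a b :=
    hcont.intervalIntegrable a b
  have hle : a ≤ b := le_of_lt hab
  have h1 : ∫ ζ in a..b, (ρM⁻¹ : ℝ) ≤ ∫ ζ in a..b, 1 / ρ ζ := by
    apply intervalIntegral.integral_mono_on hle (intervalIntegrable_const) hint
    intro x _
    rw [one_div]
    exact inv_anti₀ (hpos x) (hρ_up x)
  have h2 : ∫ ζ in a..b, 1 / ρ ζ ≤ ∫ ζ in a..b, (ρm⁻¹ : ℝ) := by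
    apply intervalIntegral.integral_mono_on hle hint (intervalIntegrable_const)
    intro x _
    rw [one_div]
    exact inv_anti₀ hρm (hρ_low x)
  rw [intervalIntegral.integral_const, smul_eq_mul] at h1 h2
  have hba : (0:ℝ) < b - a := by linarith
  constructor
  · rw [one_div]
    calc ρM⁻¹ = (b - a)⁻¹ * ((b - a) * ρM⁻¹) := by field_simp
    _ ≤ (b - a)⁻¹ * ∫ ζ in a..b, 1 / ρ ζ := by
        exact mul_le_mul_of_nonneg_left h1 (le_of_lt (inv_pos.mpr hba))
  · rw [one_div]
    calc (b - a)⁻¹ * ∫ ζ in a..b, 1 / ρ ζ ≤ (b - a)⁻¹ * ((b - a) * ρm⁻¹) :=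
        mul_le_mul_of_nonneg_left h2 (le_of_lt (inv_pos.mpr hba))
    _ = ρm⁻¹ := by field_simp

/-- Interface density identity: let `ρ : ℝ → ℝ` be continuous with
`0 < ρ_m ≤ ρ(z) ≤ ρ_M`, let `g(p) = ∫₀ᵖ 1/ρ(z) dz`, and define the interface
density `ρ_{KL}` by `1/ρ_{KL} = (1/(p_L − p_K))·∫_{p_K}^{p_L} 1/ρ(ζ) dζ` for
`p_K ≠ p_L` and `ρ_{KL} = ρ(p_K)` otherwise. Then `ρ_{KL}` is well defined with
`ρ_m ≤ ρ_{KL} ≤ ρ_M`, and `ρ_{KL}·(g(p_K) − g(p_L)) = p_K − p_L` for all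
`p_K, p_L`. -/
theorem interface_density_identity
    (ρ : ℝ → ℝ) (ρm ρM : ℝ) (hρm : 0 < ρm)
    (hρ_cont : Continuous ρ)
    (hρ_low : ∀ z, ρm ≤ ρ z) (hρ_up : ∀ z, ρ z ≤ ρM)
    (g : ℝ → ℝ) (hg : ∀ p, g p = ∫ z in (0:ℝ)..p, 1 / ρ z)
    (ρKL : ℝ → ℝ → ℝ)
    (hρKL : ∀ pK pL, pK ≠ pL →
      (ρKL pK pL)⁻¹ = 1 / (pL - pK) * ∫ ζ in pK..pL, 1 / ρ ζ)
    (hρKL_eq : ∀ pK, ρKL pK pK = ρ pK) :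
    ∀ pK pL, (ρm ≤ ρKL pK pL ∧ ρKL pK pL ≤ ρM) ∧
      ρKL pK pL * (g pK - g pL) = pK - pL := by
  intro pK pL
  have hρM : 0 < ρM := lt_of_lt_of_le hρm ((hρ_low 0).trans (hρ_up 0))
  have hpos : ∀ z, (0:ℝ) < ρ z := fun z => lt_of_lt_of_le hρm (hρ_low z)
  have hcont : Continuous (fun z => 1 / ρ z) :=
    by exact continuous_const.div hρ_cont (fun z => ne_of_gt (hpos z))
  by_cases heq : pK = pL
  · subst heq
    refine ⟨⟨by rw [hρKL_eq]; exact hρ_low pK, by rw [hρKL_eq]; exact hρ_up pK⟩, by ring⟩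
  · -- bounds on the inverse
    have hbnd : ρM⁻¹ ≤ (ρKL pK pL)⁻¹ ∧ (ρKL pK pL)⁻¹ ≤ ρm⁻¹ := by
      rw [hρKL pK pL heq]
      rcases lt_or_gt_of_ne heq with h | h
      · exact mean_bound ρ ρm ρM hρm hρ_cont hρ_low hρ_up h
      · have hsym : (1 : ℝ) / (pL - pK) * ∫ ζ in pK..pL, 1 / ρ ζ
            = 1 / (pK - pL) * ∫ ζ in pL..pK, 1 / ρ ζ := by
          rw [intervalIntegral.integral_symm pK pL]
          rw [show pK - pL = -(pL - pK) by ring, one_div, one_div, inv_neg]; ring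
        rw [hsym]
        exact mean_bound ρ ρm ρM hρm hρ_cont hρ_low hρ_up h
    have hinv_pos : 0 < (ρKL pK pL)⁻¹ := lt_of_lt_of_le (inv_pos.mpr hρM) hbnd.1
    have hρKL_pos : 0 < ρKL pK pL := inv_pos.mp hinv_pos
    have hb1 : ρm ≤ ρKL pK pL := by
      have := inv_anti₀ hinv_pos hbnd.2
      rwa [inv_inv, inv_inv] at this
    have hb2 : ρKL pK pL ≤ ρM := by
      have := inv_anti₀ (inv_pos.mpr hρM) hbnd.1
      rwa [inv_inv, inv_inv] at this
    refine ⟨⟨hb1, hb2⟩, ?_⟩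
    -- identity
    have hintab : ∀ a b : ℝ, IntervalIntegrable (fun z => 1 / ρ z) MeasureTheory.volume a b :=
      fun a b => hcont.intervalIntegrable a b
    have hgdiff : g pK - g pL = ∫ ζ in pL..pK, 1 / ρ ζ := by
      rw [hg pK, hg pL]
      exact intervalIntegral.integral_interval_sub_left (hintab 0 pK) (hintab 0 pL)
    have hKL : ∫ ζ in pK..pL, 1 / ρ ζ = (pL - pK) * (ρKL pK pL)⁻¹ := by
      have h := hρKL pK pL heq
      have hne : pL - pK ≠ 0 := sub_ne_zero.mpr (Ne.symm heq)
      field_simp at h ⊢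
      linarith [h]
    rw [hgdiff, intervalIntegral.integral_symm pK pL, hKL]
    field_simp
    ring
end
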